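/- arXiv:math/0512616 — 5 statements merged into one kernel-verified Lean document; each statement's English description precedes it below -/
import Mathlib

section
/- Let P be a lattice-face d-simplex with vertices v_1,…,v_{d+1}. Then for every permutation σ ∈ S_d and every 1 ≤ k ≤ d, the ratio z(σ,k)/z(σ,k−1) is an integer, where by convention z(σ,0) = 1. -/
open MeasureTheory Polynomial

noncomputable section

/-- The lattice points of `ℝ^d`: points all of whose coordinates are integers. -/
def latticePts (d : ℕ) : Set (Fin d → ℝ) := {x | ∀ i, ∃ n : ℤ, x i = (n : ℝ)}

/-- The projection `π^{(d-k)} : ℝ^d → ℝ^k` forgetting the last `d - k` coordinates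
(for `k ≤ d`; junk value `0` in out-of-range coordinates otherwise). -/
def projTo (d k : ℕ) (x : Fin d → ℝ) : Fin k → ℝ :=
  fun i => if h : (i : ℕ) < d then x ⟨(i : ℕ), h⟩ else 0

/-- A polytope with vertex set `V ⊆ ℝ^d` is a lattice-face polytope if for every
`0 ≤ k ≤ d-1` and every `(k+1)`-subset `U ⊆ V`, `π^{(d-k)}(aff(U) ∩ ℤ^d) = ℤ^k`. -/
def IsLatticeFace (d : ℕ) (V : Finset (Fin d → ℝ)) : Prop :=
  ∀ k : ℕ, k < d → ∀ U : Finset (Fin d → ℝ), U ⊆ V → U.card = k + 1 →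
    projTo d k '' ((affineSpan ℝ (U : Set (Fin d → ℝ)) : Set (Fin d → ℝ)) ∩ latticePts d)
      = latticePts k

/-- The last coordinate of a point of `ℝ^d`. -/
def lastCoord (d : ℕ) (x : Fin d → ℝ) : ℝ :=
  if h : 0 < d then x ⟨d - 1, by omega⟩ else 0

/-- The negative boundary `NB(P)`: points of `P` minimizing the last coordinate in
their fiber over `π(P)`. -/
def NB (d : ℕ) (P : Set (Fin d → ℝ)) : Set (Fin d → ℝ) :=
  {x | x ∈ P ∧ ∀ y ∈ P, projTo d (d - 1) y = projTo d (d - 1) x → lastCoord d x ≤ lastCoord d y}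

/-- The positive boundary `PB(P)`: points of `P` maximizing the last coordinate in
their fiber over `π(P)`. -/
def PB (d : ℕ) (P : Set (Fin d → ℝ)) : Set (Fin d → ℝ) :=
  {x | x ∈ P ∧ ∀ y ∈ P, projTo d (d - 1) y = projTo d (d - 1) x → lastCoord d y ≤ lastCoord d x}

/-- `i(P,m)`: the number of lattice points in the dilate `mP`. -/
def ehr (d : ℕ) (P : Set (Fin d → ℝ)) (m : ℕ) : ℕ :=
  (latticePts d ∩ (fun x => (m : ℝ) • x) '' P).ncard

/-- `î(P,m)`: the number of lattice points in the interior of the dilate `mP`. -/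
def intEhr (d : ℕ) (P : Set (Fin d → ℝ)) (m : ℕ) : ℕ :=
  (latticePts d ∩ interior ((fun x => (m : ℝ) • x) '' P)).ncard

/-- The `j`-th coordinate (`0`-indexed) of a point of `ℝ^d`, junk value `0` if `j ≥ d`. -/
def coordN {d : ℕ} (w : Fin d → ℝ) (j : ℕ) : ℝ := if h : j < d then w ⟨j, h⟩ else 0

/-- The vertex occurring in row `p` (0-indexed) of the matrices `X(σ,k)`, `Y(σ,k)`:
vertex `v_{σ(p+1)}` for `p < k`, and `v_{d+1}` for the last row of `X(σ,k)`. -/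
def rowVert (d : ℕ) (v : Fin (d + 1) → Fin d → ℝ) (σ : Equiv.Perm (Fin d)) (k p : ℕ) :
    Fin d → ℝ :=
  if h : p < k ∧ p < d then v (Fin.castSucc (σ ⟨p, h.2⟩)) else v (Fin.last d)

/-- The matrix `X(σ,k)` with rows `(1, x_{σ(i),1},…,x_{σ(i),k})` for `1 ≤ i ≤ k`
followed by `(1, x_{d+1,1},…,x_{d+1,k})`. -/
def Xmat (d : ℕ) (v : Fin (d + 1) → Fin d → ℝ) (σ : Equiv.Perm (Fin d)) (k : ℕ) :
    Matrix (Fin (k + 1)) (Fin (k + 1)) ℝ :=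
  Matrix.of fun p q =>
    if (q : ℕ) = 0 then 1 else coordN (rowVert d v σ k (p : ℕ)) ((q : ℕ) - 1)

/-- The matrix `Y(σ,k)` with rows `(1, x_{σ(i),1},…,x_{σ(i),k-1})` for `1 ≤ i ≤ k`. -/
def Ymat (d : ℕ) (v : Fin (d + 1) → Fin d → ℝ) (σ : Equiv.Perm (Fin d)) (k : ℕ) :
    Matrix (Fin k) (Fin k) ℝ :=
  Matrix.of fun p q =>
    if (q : ℕ) = 0 then 1 else coordN (rowVert d v σ k (p : ℕ)) ((q : ℕ) - 1)

/-- The matrix `X̃(σ,k;x)`: `X(σ,k)` with its last row replaced by `(1, x_1,…,x_k)`. -/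
def Xtil (d : ℕ) (v : Fin (d + 1) → Fin d → ℝ) (σ : Equiv.Perm (Fin d)) (k : ℕ)
    (x : Fin d → ℝ) : Matrix (Fin (k + 1)) (Fin (k + 1)) ℝ :=
  Matrix.of fun p q =>
    if (q : ℕ) = 0 then 1
    else if (p : ℕ) < k then coordN (rowVert d v σ k (p : ℕ)) ((q : ℕ) - 1)
    else coordN x ((q : ℕ) - 1)

/-- `z(σ,k) = det X(σ,k) / det Y(σ,k)`; note `z(σ,0) = 1`. -/
def zc (d : ℕ) (v : Fin (d + 1) → Fin d → ℝ) (σ : Equiv.Perm (Fin d)) (k : ℕ) : ℝ :=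
  (Xmat d v σ k).det / (Ymat d v σ k).det

/-- The minor `m(σ,k;j)` of `X̃(σ,k;x)` obtained by deleting the last row and the
`(j+1)`-st column (it does not depend on `x`). -/
def minorM (d : ℕ) (v : Fin (d + 1) → Fin d → ℝ) (σ : Equiv.Perm (Fin d)) (k j : ℕ) : ℝ :=
  (Matrix.of fun p q : Fin k =>
    Xmat d v σ k (Fin.castSucc p) (if (q : ℕ) < j + 1 then Fin.castSucc q else q.succ)).det

/-- A `d`-simplex with vertices `v_1, …, v_{d+1}` is in general position if its vertices
are affinely independent and for every `0 ≤ k ≤ d-1` and every `(k+1)`-subset `U` of the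
vertex set, `π^{(d-k)}(conv U)` is a `k`-simplex. -/
def SimplexGenPos (d : ℕ) (v : Fin (d + 1) → Fin d → ℝ) : Prop :=
  AffineIndependent ℝ v ∧
    ∀ k : ℕ, k < d → ∀ U : Finset (Fin (d + 1)), U.card = k + 1 →
      affineSpan ℝ (projTo d k '' (v '' (U : Set (Fin (d + 1))))) = ⊤

/-- A lattice-face `d`-simplex, given by its `d+1` affinely independent vertices. -/
def SimplexLatticeFace (d : ℕ) (v : Fin (d + 1) → Fin d → ℝ) : Prop :=
  AffineIndependent ℝ v ∧
    ∀ k : ℕ, k < d → ∀ U : Finset (Fin (d + 1)), U.card = k + 1 →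
      projTo d k ''
          ((affineSpan ℝ (v '' (U : Set (Fin (d + 1)))) : Set (Fin d → ℝ)) ∩ latticePts d)
        = latticePts k

open scoped Classical in
/-- The sign of a facet `F` of `P`: `+1` if `F` has a relative-interior point on the
positive boundary, `-1` if on the negative boundary, `0` otherwise. -/
def facetSign (d : ℕ) (P F : Set (Fin d → ℝ)) : ℝ :=
  if ∃ x ∈ intrinsicInterior ℝ F, x ∈ PB d P then 1
  else if ∃ x ∈ intrinsicInterior ℝ F, x ∈ NB d P then -1
  else 0

/-- The Bernoulli polynomial `B_n(x)`, as a real polynomial. -/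
def bernR (n : ℕ) : Polynomial ℝ := (Polynomial.bernoulli n).map (algebraMap ℚ ℝ)

/-- The `k`-th power sum polynomial `P_k(x) = (B_{k+1}(x+1) - B_{k+1}(0))/(k+1)`. -/
def PkR (k : ℕ) : Polynomial ℝ :=
  Polynomial.C (((k : ℝ) + 1)⁻¹) *
    ((bernR (k + 1)).comp (Polynomial.X + 1) - Polynomial.C ((bernR (k + 1)).eval 0))

/-- The extension of the summation operation: for a polynomial `h(s) = Σ_k h_k s^k`,
`Σ_{s=1}^{u} h := h_0 u + Σ_{k ≥ 1} h_k P_k(u)`, as a polynomial in the upper bound `u`. -/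
def extSumPoly (h : Polynomial ℝ) : Polynomial ℝ :=
  Polynomial.C (h.coeff 0) * Polynomial.X +
    ∑ k ∈ Finset.Icc 1 h.natDegree, Polynomial.C (h.coeff k) * PkR k

/-- `fdPoly n a` is the polynomial (in the first variable `a_1`) expressing
`f_{n+1}(a_1, a 0, a 1, …)`, defined recursively by `f_1(a_1) = a_1` and
`f_d(a_1,…,a_d) = Σ_{s=1}^{a_1} f_{d-1}(a_2 s, a_3, …, a_d)` using the extended sum. -/
def fdPoly : ℕ → (ℕ → ℝ) → Polynomial ℝ
  | 0, _ => Polynomial.X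
  | n + 1, a =>
      extSumPoly ((fdPoly n (fun i => a (i + 1))).comp (Polynomial.C (a 0) * Polynomial.X))

/-- `f_d(a_1, …, a_d)` where `a_k = a (k-1)` (0-indexed). -/
def fd (d : ℕ) (a : ℕ → ℝ) : ℝ := (fdPoly (d - 1) (fun i => a (i + 1))).eval (a 0)

/-- `g_d(b_1, …, b_d) = f_d(b_1/b_0, b_2/b_1, …, b_d/b_{d-1})` where `b_k = b k` and
`b 0 = 1` by convention. -/
def gd (d : ℕ) (b : ℕ → ℝ) : ℝ := fd d (fun i => b (i + 1) / b i)

/-- `x̄` for an integer: `x̄ = x` if `x ≥ 0` and `x̄ = -x-1` if `x < 0`. -/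
def barNat (n : ℤ) : ℕ := if 0 ≤ n then n.toNat else (-n - 1).toNat

/-- The half-open segment `Ω(conv(0,x))`: `(0,x]` if `x ≥ 0` and `(x,0]` if `x < 0`. -/
def hoSeg (x : ℝ) : Set ℝ := if 0 ≤ x then Set.Ioc 0 x else Set.Ioc x 0

/-- The previous coordinate `s_{k-1}` of a point `s ∈ ℝ^d`, with `s_0 = 1`. -/
def sPrev (d : ℕ) (s : Fin d → ℝ) (k : Fin d) : ℝ :=
  if (k : ℕ) = 0 then 1 else s ⟨(k : ℕ) - 1, lt_of_le_of_lt (Nat.sub_le _ _) k.isLt⟩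

/-- The nested sum `Σ_{s_1=1}^{⌊a_1 sp⌋¯} Σ_{s_2=1}^{⌊a_2 s_1⌋¯} ⋯ 1` over positive
integers. -/
def nestedCount : ℕ → (ℕ → ℝ) → ℕ → ℕ
  | 0, _, _ => 1
  | n + 1, a, sp =>
      ∑ s ∈ Finset.Icc 1 (barNat ⌊a 0 * (sp : ℝ)⌋), nestedCount n (fun i => a (i + 1)) s

/-- The nested extended sum `Σ_{s_1=1}^{\bar{a_1 s_0}} ⋯ Σ_{s_d=1}^{\bar{a_d s_{d-1}}} 1`,
as a polynomial in `s_0`, where for positive `s` the bar is `a s` if `a > 0` and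
`-a s - 1` if `a < 0`. -/
def barNested : ℕ → (ℕ → ℝ) → Polynomial ℝ
  | 0, _ => 1
  | n + 1, a =>
      (extSumPoly (barNested n (fun i => a (i + 1)))).comp
        (if 0 < a 0 then Polynomial.C (a 0) * Polynomial.X
         else -(Polynomial.C (a 0) * Polynomial.X) - 1)

/-- Row vertex for the hat matrices: `v_{σ(p+1)}` for `p < d`. -/
def rowVert' (d : ℕ) (v : Fin (d + 1) → Fin d → ℝ) (σ : Equiv.Perm (Fin d)) (p : ℕ) :
    Fin d → ℝ :=
  if h : p < d then v (Fin.castSucc (σ ⟨p, h⟩)) else v (Fin.last d)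

/-- The matrix `X̂(σ,k)` with entries `x̂_{σ(p),q} = x_{σ(p),q} - x_{d+1,q}`. -/
def XhatM (d : ℕ) (v : Fin (d + 1) → Fin d → ℝ) (σ : Equiv.Perm (Fin d)) (k : ℕ) :
    Matrix (Fin k) (Fin k) ℝ :=
  Matrix.of fun p q =>
    coordN (rowVert' d v σ (p : ℕ)) (q : ℕ) - coordN (v (Fin.last d)) (q : ℕ)

/-- The matrix `Ŷ(σ,k)` with rows `(1, x̂_{σ(p),1},…,x̂_{σ(p),k-1})`. -/
def YhatM (d : ℕ) (v : Fin (d + 1) → Fin d → ℝ) (σ : Equiv.Perm (Fin d)) (k : ℕ) :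
    Matrix (Fin k) (Fin k) ℝ :=
  Matrix.of fun p q =>
    if (q : ℕ) = 0 then 1
    else coordN (rowVert' d v σ (p : ℕ)) ((q : ℕ) - 1) - coordN (v (Fin.last d)) ((q : ℕ) - 1)

/-- `ẑ(σ,k) = det X̂(σ,k) / det Ŷ(σ,k)`. -/
def zhat (d : ℕ) (v : Fin (d + 1) → Fin d → ℝ) (σ : Equiv.Perm (Fin d)) (k : ℕ) : ℝ :=
  (XhatM d v σ k).det / (YhatM d v σ k).det

end

namespace ZRatioAux

open Finset

variable {d : ℕ}

lemma projTo_apply {j : ℕ} (hj : j ≤ d) (x : Fin d → ℝ) (i : Fin j) :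
    projTo d j x i = x ⟨(i : ℕ), lt_of_lt_of_le i.isLt hj⟩ :=
  dif_pos _

lemma coordN_apply {m : ℕ} (hm : m < d) (x : Fin d → ℝ) :
    coordN x m = x ⟨m, hm⟩ :=
  dif_pos _

/-- `projTo` as a linear map. -/
def Lproj (d j : ℕ) : (Fin d → ℝ) →ₗ[ℝ] (Fin j → ℝ) where
  toFun := projTo d j
  map_add' x y := by
    funext i; simp only [projTo, Pi.add_apply]; split <;> simp
  map_smul' c x := by
    funext i; simp only [projTo, Pi.smul_apply, RingHom.id_apply]; split <;> simp

lemma latticePts_proj {j : ℕ} {x : Fin d → ℝ} (hx : x ∈ latticePts d) :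
    projTo d j x ∈ latticePts j := by
  intro i
  by_cases h : (i : ℕ) < d
  · simpa [projTo, h] using hx ⟨(i : ℕ), h⟩
  · exact ⟨0, by simp [projTo, h]⟩

lemma injOn_vectorSpan (v : Fin (d + 1) → Fin d → ℝ) (hLF : SimplexLatticeFace d v)
    {j : ℕ} (hj : j ≤ d) (U : Finset (Fin (d + 1))) (hU : U.card = j + 1)
    {u : Fin d → ℝ} (hu : u ∈ vectorSpan ℝ (v '' (U : Set (Fin (d + 1)))))
    (hpu : projTo d j u = 0) : u = 0 := by
  rcases lt_or_eq_of_le hj with hjd | rfl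
  · classical
    set V : Submodule ℝ (Fin d → ℝ) := vectorSpan ℝ (v '' (U : Set (Fin (d + 1)))) with hV
    have hfr : Module.finrank ℝ V = j := by
      have h := hLF.1.finrank_vectorSpan_image_finset (s := U) (n := j) hU
      rw [Finset.coe_image] at h
      exact h
    have hset := hLF.2 j hjd U hU
    have h0 : (0 : Fin j → ℝ) ∈ latticePts j := fun i => ⟨0, by simp⟩
    rw [← hset] at h0
    obtain ⟨p0, ⟨hp0s, -⟩, hp0⟩ := h0
    set f : V →ₗ[ℝ] (Fin j → ℝ) := (Lproj d j).comp V.subtype with hf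
    have hrange : LinearMap.range f = ⊤ := by
      rw [eq_top_iff, ← (Pi.basisFun ℝ (Fin j)).span_eq, Submodule.span_le]
      rintro x ⟨i, rfl⟩
      have hsing : Pi.single i (1 : ℝ) ∈ latticePts j := by
        intro m
        by_cases hm : m = i
        · exact ⟨1, by rw [hm]; simp⟩
        · exact ⟨0, by simp [Pi.single_apply, hm]⟩
      rw [← hset] at hsing
      obtain ⟨p1, ⟨hp1s, -⟩, hp1⟩ := hsing
      have hmem : p1 - p0 ∈ V := by
        have h := AffineSubspace.vsub_mem_direction hp1s hp0s
        rw [direction_affineSpan] at h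
        exact h
      refine ⟨⟨p1 - p0, hmem⟩, ?_⟩
      show projTo d j (p1 - p0) = _
      funext m
      have h1 := congrFun hp1 m
      have h2 := congrFun hp0 m
      rw [projTo_apply (le_of_lt hjd)] at h1 h2
      rw [projTo_apply (le_of_lt hjd)]
      simp [Pi.sub_apply, h1, h2, Pi.basisFun_apply]
    have hker : LinearMap.ker f = ⊥ := by
      have hrn := LinearMap.finrank_range_add_finrank_ker f
      rw [hrange, finrank_top, Module.finrank_fin_fun, hfr] at hrn
      have h0' : Module.finrank ℝ (LinearMap.ker f) = 0 := by omega
      exact Submodule.finrank_eq_zero.mp h0'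
    have hmem : (⟨u, hu⟩ : V) ∈ LinearMap.ker f := by
      show projTo d j u = 0
      exact hpu
    rw [hker, Submodule.mem_bot] at hmem
    exact congrArg Subtype.val hmem
  · funext i
    have h := congrFun hpu ⟨(i : ℕ), i.isLt⟩
    simpa [projTo, i.isLt] using h

lemma proj_injOn (v : Fin (d + 1) → Fin d → ℝ) (hLF : SimplexLatticeFace d v)
    {j : ℕ} (hj : j ≤ d) (U : Finset (Fin (d + 1))) (hU : U.card = j + 1)
    {x y : Fin d → ℝ} (hx : x ∈ affineSpan ℝ (v '' (U : Set (Fin (d + 1)))))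
    (hy : y ∈ affineSpan ℝ (v '' (U : Set (Fin (d + 1)))))
    (hxy : projTo d j x = projTo d j y) : x = y := by
  have hsub : x - y ∈ vectorSpan ℝ (v '' (U : Set (Fin (d + 1)))) := by
    have h := AffineSubspace.vsub_mem_direction hx hy
    rw [direction_affineSpan] at h
    exact h
  have h0 : projTo d j (x - y) = 0 := by
    funext i
    rw [projTo_apply hj]
    have h := congrFun hxy i
    rw [projTo_apply hj, projTo_apply hj] at h
    simp [Pi.sub_apply, h]
  exact sub_eq_zero.mp (injOn_vectorSpan v hLF hj U hU hsub h0)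

lemma exists_section (v : Fin (d + 1) → Fin d → ℝ) (hLF : SimplexLatticeFace d v)
    {j : ℕ} (hj : j ≤ d) (U : Finset (Fin (d + 1))) (hU : U.card = j + 1)
    {t : Fin j → ℝ} (ht : t ∈ latticePts j) :
    ∃ p, p ∈ affineSpan ℝ (v '' (U : Set (Fin (d + 1)))) ∧ p ∈ latticePts d ∧
      projTo d j p = t := by
  rcases lt_or_eq_of_le hj with hjd | rfl
  · have hset := hLF.2 j hjd U hU
    rw [← hset] at ht
    obtain ⟨p, ⟨h1, h2⟩, h3⟩ := ht
    exact ⟨p, h1, h2, h3⟩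
  · have hUuniv : U = Finset.univ := Finset.eq_univ_of_card U (by simp [hU])
    have hspan : affineSpan ℝ (v '' ↑U) = ⊤ := by
      rw [hUuniv]
      simp only [Finset.coe_univ, Set.image_univ]
      rw [hLF.1.affineSpan_eq_top_iff_card_eq_finrank_add_one]
      simp [Module.finrank_fin_fun]
    refine ⟨fun i => t ⟨(i : ℕ), i.isLt⟩, by rw [hspan]; trivial,
      fun i => ht ⟨(i : ℕ), i.isLt⟩, ?_⟩
    funext i
    rw [projTo_apply le_rfl]

lemma vert_lattice (v : Fin (d + 1) → Fin d → ℝ) (hLF : SimplexLatticeFace d v)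
    (hd : 1 ≤ d) (i : Fin (d + 1)) : v i ∈ latticePts d := by
  have hset := hLF.2 0 hd {i} (by simp)
  have ht : (fun _ : Fin 0 => (0 : ℝ)) ∈ latticePts 0 := fun i => i.elim0
  rw [← hset] at ht
  obtain ⟨p, ⟨h1, h2⟩, -⟩ := ht
  have hp : p = v i := by
    rw [Finset.coe_singleton, Set.image_singleton] at h1
    exact (AffineSubspace.mem_affineSpan_singleton ℝ _).mp h1
  rwa [hp] at h2

/-- The index of the `p`-th vertex `v_{σ(p+1)}`. -/
def vIdx (d : ℕ) (σ : Equiv.Perm (Fin d)) {j : ℕ} (hj : j ≤ d) (p : Fin j) : Fin (d + 1) :=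
  Fin.castSucc (σ (Fin.castLE hj p))

lemma vIdx_inj (σ : Equiv.Perm (Fin d)) {j : ℕ} (hj : j ≤ d) :
    Function.Injective (vIdx d σ hj) := by
  intro a b h
  have h1 := Fin.castSucc_injective d h
  have h2 := σ.injective h1
  exact Fin.castLE_injective hj h2

/-- The finset of the first `j` vertex indices. -/
def UJ (d : ℕ) (σ : Equiv.Perm (Fin d)) {j : ℕ} (hj : j ≤ d) : Finset (Fin (d + 1)) :=
  Finset.image (vIdx d σ hj) Finset.univ

lemma UJ_card (σ : Equiv.Perm (Fin d)) {j : ℕ} (hj : j ≤ d) : (UJ d σ hj).card = j := by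
  rw [UJ, Finset.card_image_of_injective _ (vIdx_inj σ hj), Finset.card_univ, Fintype.card_fin]

lemma UJ_mono (σ : Equiv.Perm (Fin d)) {j₁ j₂ : ℕ} (h12 : j₁ ≤ j₂) (hj2 : j₂ ≤ d) :
    UJ d σ (le_trans h12 hj2) ⊆ UJ d σ hj2 := by
  intro x hx
  rw [UJ, Finset.mem_image] at hx ⊢
  obtain ⟨p, -, rfl⟩ := hx
  exact ⟨Fin.castLE h12 p, Finset.mem_univ _, rfl⟩

lemma image_UJ (v : Fin (d + 1) → Fin d → ℝ) (σ : Equiv.Perm (Fin d)) {j : ℕ} (hj : j ≤ d) :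
    v '' ((UJ d σ hj : Finset (Fin (d + 1))) : Set (Fin (d + 1)))
      = Set.range (fun p : Fin j => v (vIdx d σ hj p)) := by
  rw [UJ, Finset.coe_image, Finset.coe_univ, Set.image_univ, ← Set.range_comp]
  rfl

lemma last_not_mem_UJ (σ : Equiv.Perm (Fin d)) {j : ℕ} (hj : j ≤ d) :
    Fin.last d ∉ UJ d σ hj := by
  rw [UJ, Finset.mem_image]
  rintro ⟨p, -, h⟩
  have := congrArg Fin.val h
  simp only [vIdx, Fin.coe_castSucc, Fin.val_last] at this
  exact absurd this (Nat.ne_of_lt (σ (Fin.castLE hj p)).isLt)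

lemma rowVert_lt (v : Fin (d + 1) → Fin d → ℝ) (σ : Equiv.Perm (Fin d)) {j : ℕ}
    (hj : j ≤ d) (p : Fin j) :
    rowVert d v σ j (p : ℕ) = v (vIdx d σ hj p) := by
  have h : (p : ℕ) < j ∧ (p : ℕ) < d := ⟨p.isLt, lt_of_lt_of_le p.isLt hj⟩
  rw [rowVert, dif_pos h]
  rfl

lemma rowVert_self (v : Fin (d + 1) → Fin d → ℝ) (σ : Equiv.Perm (Fin d)) (j : ℕ) :
    rowVert d v σ j j = v (Fin.last d) := by
  rw [rowVert, dif_neg]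
  simp

lemma detX_eq (v : Fin (d + 1) → Fin d → ℝ) (σ : Equiv.Perm (Fin d)) {j : ℕ}
    (hj1 : 1 ≤ j) (hj : j ≤ d) {c : Fin d → ℝ}
    (hc : c ∈ affineSpan ℝ (v '' ((UJ d σ hj : Finset (Fin (d + 1))) : Set (Fin (d + 1)))))
    (hmatch : ∀ m : ℕ, (hm : m < j - 1) → c ⟨m, by omega⟩ = v (Fin.last d) ⟨m, by omega⟩) :
    (Xmat d v σ j).det
      = (v (Fin.last d) ⟨j - 1, by omega⟩ - c ⟨j - 1, by omega⟩) * (Ymat d v σ j).det := by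
  classical
  rw [image_UJ] at hc
  obtain ⟨w, hw, hcw⟩ := eq_affineCombination_of_mem_affineSpan_of_fintype hc
  rw [Finset.univ.affineCombination_eq_linear_combination _ _ hw] at hcw
  set X := Xmat d v σ j with hX
  have hXrow : ∀ p : Fin j, X (Fin.castSucc p)
      = fun q : Fin (j + 1) =>
          if (q : ℕ) = 0 then 1 else coordN (v (vIdx d σ hj p)) ((q : ℕ) - 1) := by
    intro p
    funext q
    show Xmat d v σ j (Fin.castSucc p) q = _
    rw [Xmat]
    simp only [Matrix.of_apply, Fin.coe_castSucc]
    rw [rowVert_lt v σ hj p]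
  have hjd1 : j - 1 < d := by omega
  set Δ : ℝ := v (Fin.last d) ⟨j - 1, hjd1⟩ - c ⟨j - 1, hjd1⟩ with hΔ
  have hXlast : X (Fin.last j)
      = (fun q : Fin (j + 1) => if (q : ℕ) = 0 then 1 else coordN c ((q : ℕ) - 1))
        + Δ • (fun q : Fin (j + 1) => if q = Fin.last j then (1 : ℝ) else 0) := by
    funext q
    show Xmat d v σ j (Fin.last j) q = _
    rw [Xmat]
    simp only [Matrix.of_apply, Fin.val_last, Pi.add_apply, Pi.smul_apply, smul_eq_mul]
    rw [rowVert_self]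
    by_cases hq0 : (q : ℕ) = 0
    · have hqne : q ≠ Fin.last j := by
        intro h
        rw [h] at hq0
        simp only [Fin.val_last] at hq0
        omega
      rw [if_pos hq0, if_pos hq0, if_neg hqne]
      ring
    · by_cases hql : q = Fin.last j
      · rw [if_neg hq0, if_neg hq0, if_pos hql, hql]
        simp only [Fin.val_last]
        rw [coordN_apply hjd1, coordN_apply hjd1, hΔ]
        ring
      · have hlt : (q : ℕ) - 1 < j - 1 := by
          have h1 : (q : ℕ) < j + 1 := q.isLt
          have h2 : (q : ℕ) ≠ j := fun h => hql (Fin.ext (by simp [h]))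
          omega
        have hltd : (q : ℕ) - 1 < d := by omega
        rw [if_neg hq0, if_neg hq0, if_neg hql]
        rw [coordN_apply hltd, coordN_apply hltd]
        rw [hmatch _ hlt]
        ring
  have hcomb : (fun q : Fin (j + 1) => if (q : ℕ) = 0 then (1 : ℝ) else coordN c ((q : ℕ) - 1))
      = ∑ i : Fin (j + 1),
          (fun i : Fin (j + 1) => if h : (i : ℕ) < j then w ⟨(i : ℕ), h⟩ else 0) i • X i := by
    rw [Fin.sum_univ_castSucc]
    simp only [Fin.val_last]
    rw [dif_neg (lt_irrefl j), zero_smul, add_zero]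
    funext q
    rw [Finset.sum_apply]
    have hterm : ∀ p : Fin j,
        ((fun i : Fin (j + 1) => if h : (i : ℕ) < j then w ⟨(i : ℕ), h⟩ else 0) (Fin.castSucc p)
          • X (Fin.castSucc p)) q
        = w p * (if (q : ℕ) = 0 then 1 else coordN (v (vIdx d σ hj p)) ((q : ℕ) - 1)) := by
      intro p
      rw [hXrow p]
      simp only [Pi.smul_apply, smul_eq_mul, Fin.coe_castSucc]
      rw [dif_pos p.isLt]
    rw [Finset.sum_congr rfl fun p _ => hterm p]
    by_cases hq0 : (q : ℕ) = 0
    · simp only [if_pos hq0, mul_one]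
      exact (hw).symm
    · simp only [if_neg hq0]
      have hltd : (q : ℕ) - 1 < d := by
        have : (q : ℕ) < j + 1 := q.isLt
        omega
      rw [coordN_apply hltd]
      have := congrFun hcw ⟨(q : ℕ) - 1, hltd⟩
      rw [this, Finset.sum_apply]
      refine Finset.sum_congr rfl fun p _ => ?_
      rw [Pi.smul_apply, smul_eq_mul, coordN_apply hltd]
  have hzero : (X.updateRow (Fin.last j)
      (fun q : Fin (j + 1) => if (q : ℕ) = 0 then (1 : ℝ) else coordN c ((q : ℕ) - 1))).det = 0 := by
    rw [hcomb, Matrix.det_updateRow_sum]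
    simp only [Fin.val_last]
    rw [dif_neg (lt_irrefl j)]
    simp
  have hunit : (X.updateRow (Fin.last j)
      (fun q : Fin (j + 1) => if q = Fin.last j then (1 : ℝ) else 0)).det
      = (Ymat d v σ j).det := by
    rw [Matrix.det_succ_row _ (Fin.last j)]
    rw [Finset.sum_eq_single (Fin.last j)]
    · rw [Matrix.updateRow_self]
      simp only [if_pos rfl, mul_one, Fin.val_last]
      have hpow : ((-1 : ℝ)) ^ (j + j) = 1 := Even.neg_one_pow ⟨j, rfl⟩
      rw [hpow, one_mul]
      have hsub : ((X.updateRow (Fin.last j)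
          (fun q : Fin (j + 1) => if q = Fin.last j then (1 : ℝ) else 0)).submatrix
            (Fin.last j).succAbove (Fin.last j).succAbove) = Ymat d v σ j := by
        rw [Fin.succAbove_last]
        ext p q
        rw [Matrix.submatrix_apply, Matrix.updateRow_ne (Fin.castSucc_lt_last p).ne]
        rw [hXrow p]
        show (if ((Fin.castSucc q : Fin (j + 1)) : ℕ) = 0 then (1 : ℝ) else _) = Ymat d v σ j p q
        rw [Ymat]
        simp only [Matrix.of_apply, Fin.coe_castSucc]
        rw [rowVert_lt v σ hj p]
      rw [hsub]
      simp
    · intro i _ hi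
      rw [Matrix.updateRow_self]
      rw [if_neg hi]
      ring
    · intro h
      exact absurd (Finset.mem_univ _) h
  calc X.det = (X.updateRow (Fin.last j) (X (Fin.last j))).det := by
        rw [Matrix.updateRow_eq_self]
  _ = Δ * (Ymat d v σ j).det := by
        rw [hXlast, Matrix.det_updateRow_add, Matrix.det_updateRow_smul, hzero, hunit, zero_add]

lemma detY_ne (v : Fin (d + 1) → Fin d → ℝ) (hLF : SimplexLatticeFace d v)
    (σ : Equiv.Perm (Fin d)) {j : ℕ} (hj1 : 1 ≤ j) (hj : j ≤ d) :
    (Ymat d v σ j).det ≠ 0 := by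
  classical
  intro h0
  obtain ⟨u, hu0, huY⟩ := Matrix.exists_vecMul_eq_zero_iff.mpr h0
  have hYapp : ∀ (p : Fin j) (q : Fin j), Ymat d v σ j p q
      = if (q : ℕ) = 0 then 1 else coordN (v (vIdx d σ hj p)) ((q : ℕ) - 1) := by
    intro p q
    rw [Ymat]
    simp only [Matrix.of_apply]
    rw [rowVert_lt v σ hj p]
  have hcol : ∀ q : Fin j, ∑ p, u p * Ymat d v σ j p q = 0 := by
    intro q
    have h := congrFun huY q
    simpa [Matrix.vecMul, dotProduct] using h
  have hsum0 : ∑ p, u p = 0 := by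
    have h := hcol ⟨0, by omega⟩
    simp only [hYapp] at h
    simpa using h
  have hvmem : (∑ p, u p • v (vIdx d σ hj p))
      ∈ vectorSpan ℝ (Set.range fun p : Fin j => v (vIdx d σ hj p)) := by
    have h := weightedVSub_mem_vectorSpan (s := Finset.univ) (w := u) hsum0
      (fun p : Fin j => v (vIdx d σ hj p))
    rwa [Finset.weightedVSub_eq_linear_combination _ hsum0] at h
  have hproj : projTo d (j - 1) (∑ p, u p • v (vIdx d σ hj p)) = 0 := by
    funext i
    rw [projTo_apply (by omega : j - 1 ≤ d)]
    have hid : (i : ℕ) < d := by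
      have := i.isLt
      omega
    have h := hcol ⟨(i : ℕ) + 1, by omega⟩
    simp only [hYapp] at h
    rw [Finset.sum_apply]
    simp only [Pi.zero_apply]
    rw [show (0 : ℝ) = ∑ p : Fin j, u p
        * (if ((⟨(i : ℕ) + 1, by omega⟩ : Fin j) : ℕ) = 0 then 1
            else coordN (v (vIdx d σ hj p)) (((⟨(i : ℕ) + 1, by omega⟩ : Fin j) : ℕ) - 1))
      from h.symm]
    refine Finset.sum_congr rfl fun p _ => ?_
    rw [Pi.smul_apply, smul_eq_mul]
    congr 1
    rw [if_neg (by simp : ¬ ((⟨(i : ℕ) + 1, by omega⟩ : Fin j) : ℕ) = 0)]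
    simp only [Nat.add_sub_cancel]
    rw [coordN_apply hid]
  have hvz : (∑ p, u p • v (vIdx d σ hj p)) = 0 := by
    refine injOn_vectorSpan v hLF (by omega : j - 1 ≤ d) (UJ d σ hj) ?_ ?_ hproj
    · rw [UJ_card]
      omega
    · rwa [image_UJ]
  have hAI : AffineIndependent ℝ (fun p : Fin j => v (vIdx d σ hj p)) :=
    hLF.1.comp_embedding ⟨vIdx d σ hj, vIdx_inj σ hj⟩
  have hwvs : Finset.univ.weightedVSub (fun p : Fin j => v (vIdx d σ hj p)) u = 0 := by
    rw [Finset.weightedVSub_eq_linear_combination _ hsum0, hvz]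
  obtain ⟨p0, hp0⟩ := Function.ne_iff.mp hu0
  exact hp0 (hAI Finset.univ u hsum0 hwvs p0 (Finset.mem_univ _))

lemma zc_eq (v : Fin (d + 1) → Fin d → ℝ) (hLF : SimplexLatticeFace d v)
    (σ : Equiv.Perm (Fin d)) {j : ℕ} (hj1 : 1 ≤ j) (hj : j ≤ d) {c : Fin d → ℝ}
    (hc : c ∈ affineSpan ℝ (v '' ((UJ d σ hj : Finset (Fin (d + 1))) : Set (Fin (d + 1)))))
    (hmatch : ∀ m : ℕ, (hm : m < j - 1) → c ⟨m, by omega⟩ = v (Fin.last d) ⟨m, by omega⟩) :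
    zc d v σ j = v (Fin.last d) ⟨j - 1, by omega⟩ - c ⟨j - 1, by omega⟩ := by
  rw [zc, detX_eq v σ hj1 hj hc hmatch, mul_div_assoc,
    div_self (detY_ne v hLF σ hj1 hj), mul_one]

lemma zc_zero (v : Fin (d + 1) → Fin d → ℝ) (σ : Equiv.Perm (Fin d)) :
    zc d v σ 0 = 1 := by
  rw [zc]
  have hX : (Xmat d v σ 0).det = 1 := by
    rw [Matrix.det_fin_one]
    simp [Xmat]
  have hY : (Ymat d v σ 0).det = 1 := Matrix.det_fin_zero
  rw [hX, hY]
  norm_num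

end ZRatioAux
theorem z_ratio_is_integer
    (d : ℕ) (hd : 1 ≤ d) (v : Fin (d + 1) → Fin d → ℝ)
    (hLF : SimplexLatticeFace d v) (σ : Equiv.Perm (Fin d)) (k : ℕ)
    (hk1 : 1 ≤ k) (hkd : k ≤ d) :
    ∃ n : ℤ, zc d v σ k / zc d v σ (k - 1) = (n : ℝ) := by
  classical
  have hb : v (Fin.last d) ∈ latticePts d := ZRatioAux.vert_lattice v hLF hd (Fin.last d)
  rcases eq_or_lt_of_le hk1 with hk1' | hk2
  · -- k = 1
    obtain rfl : k = 1 := hk1'.symm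
    obtain ⟨c, hcs, hcl, -⟩ := ZRatioAux.exists_section v hLF (Nat.zero_le d)
      (ZRatioAux.UJ d σ hkd) (by rw [ZRatioAux.UJ_card]) (t := fun _ : Fin 0 => 0)
      (fun i => i.elim0)
    have hzc1 : zc d v σ 1 = v (Fin.last d) ⟨0, by omega⟩ - c ⟨0, by omega⟩ :=
      ZRatioAux.zc_eq v hLF σ le_rfl hkd hcs (fun m hm => absurd hm (by omega))
    obtain ⟨nb, hnb⟩ := hb ⟨0, by omega⟩
    obtain ⟨nc, hnc⟩ := hcl ⟨0, by omega⟩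
    refine ⟨nb - nc, ?_⟩
    rw [show (1 : ℕ) - 1 = 0 from rfl, ZRatioAux.zc_zero, div_one, hzc1, hnb, hnc]
    push_cast
    ring
  · -- 2 ≤ k
    have hk1d : k - 1 ≤ d := by omega
    have hk2d : k - 2 ≤ d := by omega
    have hk2lt : k - 2 < d := by omega
    have hk1lt : k - 1 < d := by omega
    -- the point c2 on aff(v_{σ(1)},…,v_{σ(k)}) over the first k-1 coordinates of b
    obtain ⟨c2, hc2s, hc2l, hc2p⟩ := ZRatioAux.exists_section v hLF hk1d
      (ZRatioAux.UJ d σ hkd) (by rw [ZRatioAux.UJ_card]; omega)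
      (ZRatioAux.latticePts_proj (j := k - 1) hb)
    -- the point c1 on aff(v_{σ(1)},…,v_{σ(k-1)}) over the first k-2 coordinates of b
    obtain ⟨c1, hc1s, hc1l, hc1p⟩ := ZRatioAux.exists_section v hLF hk2d
      (ZRatioAux.UJ d σ hk1d) (by rw [ZRatioAux.UJ_card]; omega)
      (ZRatioAux.latticePts_proj (j := k - 2) hb)
    have hc2co : ∀ m : ℕ, (hm : m < k - 1) → c2 ⟨m, by omega⟩ = v (Fin.last d) ⟨m, by omega⟩ := by
      intro m hm
      have h := congrFun hc2p ⟨m, hm⟩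
      rw [ZRatioAux.projTo_apply hk1d, ZRatioAux.projTo_apply hk1d] at h
      exact h
    have hc1co : ∀ m : ℕ, (hm : m < k - 2) → c1 ⟨m, by omega⟩ = v (Fin.last d) ⟨m, by omega⟩ := by
      intro m hm
      have h := congrFun hc1p ⟨m, hm⟩
      rw [ZRatioAux.projTo_apply hk2d, ZRatioAux.projTo_apply hk2d] at h
      exact h
    set z1 : ℝ := v (Fin.last d) ⟨k - 2, hk2lt⟩ - c1 ⟨k - 2, hk2lt⟩ with hz1
    set z2 : ℝ := v (Fin.last d) ⟨k - 1, hk1lt⟩ - c2 ⟨k - 1, hk1lt⟩ with hz2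
    -- lattice point p on aff(v_{σ(1)},…,v_{σ(k)}) over π(c2) + e_{k-1}
    have htw : (fun i : Fin (k - 1) => projTo d (k - 1) c2 i
        + (if (i : ℕ) = k - 2 then (1 : ℝ) else 0)) ∈ latticePts (k - 1) := by
      intro i
      obtain ⟨n, hn⟩ := ZRatioAux.latticePts_proj (j := k - 1) hc2l i
      by_cases h : (i : ℕ) = k - 2
      · exact ⟨n + 1, by simp only [if_pos h, hn]; push_cast; ring⟩
      · exact ⟨n, by simp only [if_neg h, hn, add_zero]⟩
    obtain ⟨p, hps, hpl, hpp⟩ := ZRatioAux.exists_section v hLF hk1d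
      (ZRatioAux.UJ d σ hkd) (by rw [ZRatioAux.UJ_card]; omega) htw
    -- lattice point q on aff(v_{σ(1)},…,v_{σ(k-1)}, v_{d+1}) over π(c1) + e_{k-1}
    set U2 : Finset (Fin (d + 1)) := insert (Fin.last d) (ZRatioAux.UJ d σ hk1d) with hU2
    have hU2card : U2.card = (k - 1) + 1 := by
      rw [hU2, Finset.card_insert_of_notMem (ZRatioAux.last_not_mem_UJ σ hk1d),
        ZRatioAux.UJ_card]
    have htg : (fun i : Fin (k - 1) => projTo d (k - 1) c1 i
        + (if (i : ℕ) = k - 2 then (1 : ℝ) else 0)) ∈ latticePts (k - 1) := by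
      intro i
      obtain ⟨n, hn⟩ := ZRatioAux.latticePts_proj (j := k - 1) hc1l i
      by_cases h : (i : ℕ) = k - 2
      · exact ⟨n + 1, by simp only [if_pos h, hn]; push_cast; ring⟩
      · exact ⟨n, by simp only [if_neg h, hn, add_zero]⟩
    obtain ⟨q, hqs, hql, hqp⟩ := ZRatioAux.exists_section v hLF hk1d U2 hU2card htg
    -- memberships
    have hbU2 : v (Fin.last d) ∈ affineSpan ℝ (v '' (U2 : Set (Fin (d + 1)))) := by
      apply subset_affineSpan
      exact Set.mem_image_of_mem v (by simp [hU2])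
    have hc1U2 : c1 ∈ affineSpan ℝ (v '' (U2 : Set (Fin (d + 1)))) :=
      affineSpan_mono ℝ (Set.image_mono (f := v) (Finset.coe_subset.mpr
        (Finset.subset_insert _ _))) hc1s
    have hc1Uk : c1 ∈ affineSpan ℝ (v '' ((ZRatioAux.UJ d σ hkd : Finset (Fin (d + 1))) :
        Set (Fin (d + 1)))) :=
      affineSpan_mono ℝ (Set.image_mono (f := v) (Finset.coe_subset.mpr
        (ZRatioAux.UJ_mono σ (by omega) hkd))) hc1s
    -- Claim 1 : c2 = c1 + z1 • (p - c2)
    have hclaim1 : c2 = c1 + z1 • (p - c2) := by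
      refine ZRatioAux.proj_injOn v hLF hk1d (ZRatioAux.UJ d σ hkd)
        (by rw [ZRatioAux.UJ_card]; omega) hc2s ?_ ?_
      · have hdir : p - c2 ∈ (affineSpan ℝ (v '' ((ZRatioAux.UJ d σ hkd :
            Finset (Fin (d + 1))) : Set (Fin (d + 1))))).direction := by
          have h := AffineSubspace.vsub_mem_direction hps hc2s
          rwa [vsub_eq_sub] at h
        have h := AffineSubspace.vadd_mem_of_mem_direction
          (Submodule.smul_mem _ z1 hdir) hc1Uk
        rw [add_comm c1 (z1 • (p - c2))]
        exact h
      · funext i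
        rw [ZRatioAux.projTo_apply hk1d, ZRatioAux.projTo_apply hk1d]
        simp only [Pi.add_apply, Pi.smul_apply, Pi.sub_apply, smul_eq_mul]
        have hpi := congrFun hpp i
        rw [ZRatioAux.projTo_apply hk1d] at hpi
        rw [ZRatioAux.projTo_apply hk1d] at hpi
        have hc2i := hc2co (i : ℕ) i.isLt
        by_cases h : (i : ℕ) = k - 2
        · rw [if_pos h] at hpi
          have e1 : c1 (⟨(i : ℕ), lt_of_lt_of_le i.isLt hk1d⟩ : Fin d) = c1 ⟨k - 2, hk2lt⟩ :=
            congrArg c1 (Fin.ext h)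
          have e2 : v (Fin.last d) (⟨(i : ℕ), lt_of_lt_of_le i.isLt hk1d⟩ : Fin d)
              = v (Fin.last d) ⟨k - 2, hk2lt⟩ := congrArg _ (Fin.ext h)
          rw [e1] at *
          rw [e2] at hc2i
          rw [hc2i] at hpi ⊢
          rw [hz1, hpi]
          ring
        · rw [if_neg h] at hpi
          have hc1i := hc1co (i : ℕ) (by omega)
          rw [hc2i] at hpi ⊢
          rw [hc1i, hpi]
          ring
    -- Claim 2 : b = c1 + z1 • (q - c1)
    have hclaim2 : v (Fin.last d) = c1 + z1 • (q - c1) := by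
      refine ZRatioAux.proj_injOn v hLF hk1d U2 hU2card hbU2 ?_ ?_
      · have hdir : q - c1 ∈ (affineSpan ℝ (v '' (U2 : Set (Fin (d + 1))))).direction := by
          have h := AffineSubspace.vsub_mem_direction hqs hc1U2
          rwa [vsub_eq_sub] at h
        have h := AffineSubspace.vadd_mem_of_mem_direction
          (Submodule.smul_mem _ z1 hdir) hc1U2
        rw [add_comm c1 (z1 • (q - c1))]
        exact h
      · funext i
        rw [ZRatioAux.projTo_apply hk1d, ZRatioAux.projTo_apply hk1d]
        simp only [Pi.add_apply, Pi.smul_apply, Pi.sub_apply, smul_eq_mul]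
        have hqi := congrFun hqp i
        rw [ZRatioAux.projTo_apply hk1d] at hqi
        rw [ZRatioAux.projTo_apply hk1d] at hqi
        by_cases h : (i : ℕ) = k - 2
        · rw [if_pos h] at hqi
          have hidx : (⟨(i : ℕ), lt_of_lt_of_le i.isLt hk1d⟩ : Fin d) = ⟨k - 2, hk2lt⟩ :=
            Fin.ext h
          rw [hidx] at hqi ⊢
          rw [hz1, hqi]
          ring
        · rw [if_neg h] at hqi
          have hc1i := hc1co (i : ℕ) (by omega)
          rw [hc1i] at hqi ⊢
          rw [hqi]
          ring
    -- combine at coordinate k-1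
    have h1 := congrFun hclaim1 ⟨k - 1, hk1lt⟩
    have h2 := congrFun hclaim2 ⟨k - 1, hk1lt⟩
    simp only [Pi.add_apply, Pi.smul_apply, Pi.sub_apply, smul_eq_mul] at h1 h2
    have hkey : z2 = z1 * ((q ⟨k - 1, hk1lt⟩ - c1 ⟨k - 1, hk1lt⟩)
        - (p ⟨k - 1, hk1lt⟩ - c2 ⟨k - 1, hk1lt⟩)) := by
      linear_combination h2 - h1
    obtain ⟨nq, hnq⟩ := hql ⟨k - 1, hk1lt⟩
    obtain ⟨nc1, hnc1⟩ := hc1l ⟨k - 1, hk1lt⟩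
    obtain ⟨np, hnp⟩ := hpl ⟨k - 1, hk1lt⟩
    obtain ⟨nc2, hnc2⟩ := hc2l ⟨k - 1, hk1lt⟩
    have hkeyN : z2 = z1 * ((nq - nc1 - (np - nc2) : ℤ) : ℝ) := by
      rw [hkey, hnq, hnc1, hnp, hnc2]
      push_cast
      ring
    have hzck : zc d v σ k = z2 := by
      have h := ZRatioAux.zc_eq v hLF σ (by omega) hkd hc2s (fun m hm => hc2co m (by omega))
      rw [h, hz2]
    have hzck1 : zc d v σ (k - 1) = z1 := by
      have h := ZRatioAux.zc_eq v hLF σ (by omega : 1 ≤ k - 1) hk1d hc1s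
        (fun m hm => hc1co m (by omega))
      rw [h, hz1]
      congr 1 <;> exact congrArg _ (Fin.ext (by omega))
    by_cases hz10 : z1 = 0
    · refine ⟨0, ?_⟩
      rw [hzck, hzck1, hkeyN, hz10]
      simp
    · refine ⟨nq - nc1 - (np - nc2), ?_⟩
      rw [hzck, hzck1, hkeyN, mul_comm, mul_div_assoc, div_self hz10, mul_one]
end

section
/- Let b_0 = 1 and let b_1,…,b_d be nonzero real numbers with b_d > 0; set a_k' = b_k/b_{k−1} and a_k = b_k/|b_{k−1}| for 1 ≤ k ≤ d. Let S ⊆ ℝ^d be the set of points s = (s_1,…,s_d) such that, with s_0 = 1, for every 1 ≤ k ≤ d the coordinate s_k lies in the half-open interval Ω(conv(0, a_k' s_{k−1})) (which equals (0, x] if x = a_k' s_{k−1} ≥ 0 and (x, 0] if x < 0). Then the number of lattice points of S is |L(S)| = Σ_{s_1=1}^{ ⌊a_1⌋¯ } Σ_{s_2=1}^{ ⌊a_2 s_1⌋¯ } ⋯ Σ_{s_d=1}^{ ⌊a_d s_{d−1}⌋¯ } 1, where each summation index s_i runs over positive integers, ⌊x⌋ is the floor of x, and x̄ = x if x ≥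 0 and x̄ = −x−1 if x < 0 (a sum whose upper bound is 0 is taken to be 0). -/
open MeasureTheory Polynomial

section ProofAux

def sPrevG (c : ℝ) {n : ℕ} (s : Fin n → ℝ) (k : Fin n) : ℝ :=
  if (k : ℕ) = 0 then c else s ⟨(k : ℕ) - 1, lt_of_le_of_lt (Nat.sub_le _ _) k.isLt⟩

lemma sPrev_eq (d : ℕ) (s : Fin d → ℝ) (k : Fin d) : sPrev d s k = sPrevG 1 s k := rfl

lemma sPrevG_zero (c : ℝ) {n : ℕ} (s : Fin (n+1) → ℝ) : sPrevG c s 0 = c := rfl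

lemma sPrevG_succ (c x : ℝ) {n : ℕ} (s' : Fin n → ℝ) (j : Fin n) :
    sPrevG c (Fin.cons x s') j.succ = sPrevG x s' j := by
  unfold sPrevG
  rcases Nat.eq_zero_or_pos (j : ℕ) with hj | hj
  · have h1 : ((j.succ : Fin (n+1)) : ℕ) = 1 := by simp [Fin.val_succ, hj]
    have h2 : (⟨((j.succ : Fin (n+1)) : ℕ) - 1, lt_of_le_of_lt (Nat.sub_le _ _) j.succ.isLt⟩ :
        Fin (n+1)) = 0 := by ext; simp [h1, hj]
    rw [if_neg (by simp [h1]), if_pos hj, h2, Fin.cons_zero]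
  · have hj' : ((j.succ : Fin (n+1)) : ℕ) ≠ 0 := by simp
    rw [if_neg hj', if_neg (by omega)]
    have h2 : (⟨((j.succ : Fin (n+1)) : ℕ) - 1, lt_of_le_of_lt (Nat.sub_le _ _) j.succ.isLt⟩ :
        Fin (n+1)) = Fin.succ ⟨(j : ℕ) - 1, lt_of_le_of_lt (Nat.sub_le _ _) j.isLt⟩ := by
      ext; simp [Fin.val_succ]; omega
    rw [h2, Fin.cons_succ]

lemma finite_ncard_biUnion {α β : Type*} (F : Finset β) (S : β → Set α)
    (hfin : ∀ m ∈ F, (S m).Finite)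
    (hdisj : ∀ m ∈ F, ∀ m' ∈ F, m ≠ m' → Disjoint (S m) (S m')) :
    (⋃ m ∈ F, S m).Finite ∧ (⋃ m ∈ F, S m).ncard = ∑ m ∈ F, (S m).ncard := by
  classical
  induction F using Finset.induction_on with
  | empty => simp
  | @insert a F ha ih =>
      have hfinU := (ih (fun m hm => hfin m (Finset.mem_insert_of_mem hm))
        (fun m hm m' hm' h => hdisj m (Finset.mem_insert_of_mem hm) m'
          (Finset.mem_insert_of_mem hm') h))
      have hU : (⋃ m ∈ insert a F, S m) = S a ∪ ⋃ m ∈ F, S m := by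
        simp [Set.biUnion_insert]
      have hda : Disjoint (S a) (⋃ m ∈ F, S m) := by
        refine Set.disjoint_iUnion_right.mpr fun m => Set.disjoint_iUnion_right.mpr fun hm =>
          hdisj a (Finset.mem_insert_self a F) m (Finset.mem_insert_of_mem hm)
            (fun h => ha (h ▸ hm))
      have hfa := hfin a (Finset.mem_insert_self a F)
      constructor
      · rw [hU]; exact hfa.union hfinU.1
      · rw [hU, Set.ncard_union_eq hda hfa hfinU.1, hfinU.2, Finset.sum_insert ha]

lemma sPrevG_succ' (c : ℝ) {n : ℕ} (s : Fin (n+1) → ℝ) (j : Fin n) :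
    sPrevG c s j.succ = sPrevG (s 0) (Fin.tail s) j := by
  conv_lhs => rw [← Fin.cons_self_tail s, sPrevG_succ]

lemma consRealInj (x : ℝ) {n : ℕ} :
    Function.Injective (fun s' : Fin n → ℝ => Fin.cons x s' : (Fin n → ℝ) → Fin (n+1) → ℝ) := by
  intro s1 s2 h
  funext j
  have := congrFun h j.succ
  simpa using this

theorem key : ∀ n : ℕ, ∀ b : ℕ → ℝ, (∀ k, k ≤ n → b k ≠ 0) → 0 < b n → ∀ t : ℕ,
    (latticePts n ∩ {s : Fin n → ℝ | ∀ k : Fin n,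
        s k ∈ hoSeg (b ((k : ℕ) + 1) / b (k : ℕ) *
          sPrevG (if 0 < b 0 then (t : ℝ) else -(t : ℝ)) s k)}).Finite ∧
    (latticePts n ∩ {s : Fin n → ℝ | ∀ k : Fin n,
        s k ∈ hoSeg (b ((k : ℕ) + 1) / b (k : ℕ) *
          sPrevG (if 0 < b 0 then (t : ℝ) else -(t : ℝ)) s k)}).ncard
      = nestedCount n (fun i => b (i + 1) / |b i|) t := by
  intro n
  induction n with
  | zero =>
      intro b _ _ t
      have huniv : (latticePts 0 ∩ {s : Fin 0 → ℝ | ∀ k : Fin 0,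
          s k ∈ hoSeg (b ((k : ℕ) + 1) / b (k : ℕ) *
            sPrevG (if 0 < b 0 then (t : ℝ) else -(t : ℝ)) s k)}) = Set.univ := by
        ext s
        simp only [Set.mem_inter_iff, Set.mem_setOf_eq, Set.mem_univ, iff_true, latticePts]
        exact ⟨fun i => i.elim0, fun k => k.elim0⟩
      rw [huniv]
      refine ⟨Set.finite_univ, ?_⟩
      rw [Set.ncard_univ]
      simp [nestedCount, Nat.card_unique]
  | succ n ih =>
      intro b hbne hpos t
      have hb0 : b 0 ≠ 0 := hbne 0 (by omega)
      have hb1 : b 1 ≠ 0 := hbne 1 (by omega)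
      set c : ℝ := if 0 < b 0 then (t : ℝ) else -(t : ℝ) with hc
      set x : ℝ := b 1 / |b 0| * t with hxdef
      have hx : b 1 / b 0 * c = x := by
        rcases hb0.lt_or_gt with h | h
        · rw [hc, if_neg (by linarith), hxdef, abs_of_neg h, div_neg, neg_mul, mul_neg]
        · rw [hc, if_pos h, hxdef, abs_of_pos h]
      set F : Finset ℤ := if 0 ≤ x then Finset.Icc 1 ⌊x⌋ else Finset.Icc (⌊x⌋ + 1) 0 with hF
      have hmemF : ∀ m : ℤ, m ∈ F ↔ (m : ℝ) ∈ hoSeg x := by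
        intro m
        rw [hF, hoSeg]
        split
        · rw [Finset.mem_Icc, Set.mem_Ioc, Int.le_floor]
          constructor
          · rintro ⟨h1, h2⟩; exact ⟨by exact_mod_cast h1, h2⟩
          · rintro ⟨h1, h2⟩; exact ⟨by exact_mod_cast h1, h2⟩
        · rw [Finset.mem_Icc, Set.mem_Ioc]
          constructor
          · rintro ⟨h1, h2⟩
            exact ⟨by exact_mod_cast Int.floor_lt.mp (by omega), by exact_mod_cast h2⟩
          · rintro ⟨h1, h2⟩
            have := Int.floor_lt.mpr h1
            exact ⟨by omega, by exact_mod_cast h2⟩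
      set Inner : ℤ → Set (Fin n → ℝ) := fun m => latticePts n ∩ {s' : Fin n → ℝ | ∀ j : Fin n,
          s' j ∈ hoSeg (b ((j : ℕ) + 1 + 1) / b ((j : ℕ) + 1) * sPrevG (m : ℝ) s' j)}
        with hInnerDef
      have hSeq : (latticePts (n+1) ∩ {s : Fin (n+1) → ℝ | ∀ k : Fin (n+1),
          s k ∈ hoSeg (b ((k : ℕ) + 1) / b (k : ℕ) * sPrevG c s k)})
          = ⋃ m ∈ F, (fun s' : Fin n → ℝ => Fin.cons (m : ℝ) s') '' Inner m := by
        ext s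
        simp only [Set.mem_iUnion, Set.mem_inter_iff, Set.mem_setOf_eq, Set.mem_image,
          hInnerDef, latticePts]
        constructor
        · rintro ⟨hl, hcon⟩
          obtain ⟨m, hm⟩ := hl 0
          have h0 := hcon 0
          rw [sPrevG_zero, Fin.val_zero, hx, hm] at h0
          refine ⟨m, (hmemF m).mpr h0, Fin.tail s, ⟨fun j => hl j.succ, fun j => ?_⟩, ?_⟩
          · have h1 := hcon j.succ
            rw [sPrevG_succ', hm, Fin.val_succ] at h1
            exact h1
          · rw [← hm]; exact Fin.cons_self_tail s
        · rintro ⟨m, hmF, s', ⟨hl', hcon'⟩, rfl⟩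
          constructor
          · intro i
            induction i using Fin.cases with
            | zero => exact ⟨m, by simp⟩
            | succ j => rw [Fin.cons_succ]; exact hl' j
          · intro k
            induction k using Fin.cases with
            | zero =>
                rw [Fin.cons_zero, sPrevG_zero, Fin.val_zero, hx]
                exact (hmemF m).mp hmF
            | succ j =>
                rw [Fin.cons_succ, sPrevG_succ, Fin.val_succ]
                exact hcon' j
      have hsign : ∀ m ∈ F, (m : ℝ)
          = (if 0 < b 1 then ((m.natAbs : ℕ) : ℝ) else -((m.natAbs : ℕ) : ℝ)) := by
        intro m hm
        have habs : ((m.natAbs : ℕ) : ℝ) = |(m : ℝ)| := by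
          rw [Nat.cast_natAbs]
          exact Int.cast_abs
        by_cases h : 0 ≤ x
        · rw [hF, if_pos h, Finset.mem_Icc] at hm
          have hmx : (m : ℝ) ≤ x := le_trans (by exact_mod_cast hm.2) (Int.floor_le x)
          have hm1 : (1 : ℝ) ≤ (m : ℝ) := by exact_mod_cast hm.1
          have hb1pos : 0 < b 1 := by
            by_contra h'
            push_neg at h'
            have hb1n : b 1 < 0 := lt_of_le_of_ne h' hb1
            have ht : (0 : ℝ) ≤ (t : ℝ) := Nat.cast_nonneg t
            have : x ≤ 0 := mul_nonpos_of_nonpos_of_nonneg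
              (div_nonpos_of_nonpos_of_nonneg hb1n.le (abs_nonneg _)) ht
            linarith
          rw [if_pos hb1pos, habs, abs_of_nonneg (by linarith)]
        · rw [hF, if_neg h, Finset.mem_Icc] at hm
          push_neg at h
          have hmx : (m : ℝ) ≤ 0 := by exact_mod_cast hm.2
          have hb1neg : ¬ 0 < b 1 := by
            intro h'
            have ht : (0 : ℝ) ≤ (t : ℝ) := Nat.cast_nonneg t
            have : 0 ≤ x := mul_nonneg (div_nonneg h'.le (abs_nonneg _)) ht
            linarith
          rw [if_neg hb1neg, habs, abs_of_nonpos hmx, neg_neg]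
      have hIH : ∀ m ∈ F, (Inner m).Finite ∧ (Inner m).ncard
          = nestedCount n (fun i => b (i + 1 + 1) / |b (i + 1)|) m.natAbs := by
        intro m hm
        have h := ih (fun i => b (i + 1)) (fun k hk => hbne (k + 1) (by omega)) hpos m.natAbs
        rw [← hsign m hm] at h
        exact h
      have hbi := finite_ncard_biUnion F
        (fun m => (fun s' : Fin n → ℝ => (Fin.cons (m : ℝ) s' : Fin (n+1) → ℝ)) '' Inner m)
        (fun m hm => ((hIH m hm).1).image _)
        (fun m hm m' hm' hne => by
          rw [Set.disjoint_left]
          rintro z ⟨s1, _, rfl⟩ ⟨s2, _, hz⟩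
          have h0 := congrFun hz 0
          simp only [Fin.cons_zero] at h0
          exact hne (by exact_mod_cast h0.symm))
      rw [hSeq]
      refine ⟨hbi.1, ?_⟩
      rw [hbi.2]
      rw [Finset.sum_congr rfl (fun (m : ℤ) hm =>
        (Set.ncard_image_of_injective _ (consRealInj ((m : ℤ) : ℝ))).trans (hIH m hm).2)]
      show _ = nestedCount (n + 1) (fun i => b (i + 1) / |b i|) t
      rw [nestedCount]
      by_cases hx0 : 0 ≤ x
      · rw [hF]
        rw [if_pos hx0]
        have hbar : barNat ⌊b 1 / |b 0| * (t : ℝ)⌋ = ⌊x⌋.toNat := by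
          rw [← hxdef, barNat, if_pos (Int.floor_nonneg.mpr hx0)]
        rw [hbar]
        refine Finset.sum_nbij' (fun m : ℤ => m.natAbs) (fun s : ℕ => (s : ℤ))
          ?_ ?_ ?_ ?_ ?_
        · intro m hm
          simp only [Finset.mem_Icc] at hm ⊢
          omega
        · intro m hm
          simp only [Finset.mem_Icc] at hm ⊢
          omega
        · intro m hm
          simp only [Finset.mem_Icc] at hm
          omega
        · intro m _
          omega
        · intro m _
          rfl
      · rw [hF, if_neg hx0]
        push_neg at hx0
        rcases n with - | k
        · exfalso
          have ht : (0 : ℝ) ≤ (t : ℝ) := Nat.cast_nonneg t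
          have hxx : 0 ≤ x := mul_nonneg (div_nonneg hpos.le (abs_nonneg _)) ht
          linarith
        have hfl : ⌊x⌋ < 0 := by
          rw [Int.floor_lt]
          exact_mod_cast hx0
        have hins : Finset.Icc (⌊x⌋ + 1) 0 = insert 0 (Finset.Icc (⌊x⌋ + 1) (-1)) := by
          ext m
          simp only [Finset.mem_Icc, Finset.mem_insert]
          omega
        rw [hins, Finset.sum_insert (by simp)]
        have hzero : nestedCount (k + 1) (fun i => b (i + 1 + 1) / |b (i + 1)|)
            (Int.natAbs 0) = 0 := by
          rw [Int.natAbs_zero, nestedCount]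
          norm_num [barNat]
        rw [hzero, zero_add]
        have hbar : barNat ⌊b 1 / |b 0| * (t : ℝ)⌋ = (-⌊x⌋ - 1).toNat := by
          rw [← hxdef, barNat, if_neg (by omega)]
        rw [hbar]
        refine Finset.sum_nbij' (fun m : ℤ => m.natAbs) (fun s : ℕ => -(s : ℤ))
          ?_ ?_ ?_ ?_ ?_
        · intro m hm
          simp only [Finset.mem_Icc] at hm ⊢
          omega
        · intro m hm
          simp only [Finset.mem_Icc] at hm ⊢
          omega
        · intro m hm
          simp only [Finset.mem_Icc] at hm
          omega
        · intro m _
          omega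
        · intro m _
          rfl

end ProofAux

theorem card_latticePts_of_nested_halfopen_set
    (d : ℕ) (hd : 1 ≤ d) (b : ℕ → ℝ) (hb0 : b 0 = 1)
    (hbne : ∀ k, 1 ≤ k → k ≤ d → b k ≠ 0) (hbd : 0 < b d) :
    (latticePts d ∩ {s : Fin d → ℝ | ∀ k : Fin d,
        s k ∈ hoSeg (b ((k : ℕ) + 1) / b (k : ℕ) * sPrev d s k)}).ncard
      = nestedCount d (fun i => b (i + 1) / |b i|) 1 := by
  have hbne' : ∀ k, k ≤ d → b k ≠ 0 := by
    intro k hk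
    rcases Nat.eq_zero_or_pos k with rfl | hk1
    · rw [hb0]; norm_num
    · exact hbne k hk1 hk
  have h := (key d b hbne' hbd 1).2
  have hc : (if 0 < b 0 then ((1 : ℕ) : ℝ) else -((1 : ℕ) : ℝ)) = 1 := by
    rw [if_pos (by rw [hb0]; norm_num)]; norm_num
  rw [hc] at h
  have hset : ∀ (s : Fin d → ℝ) (k : Fin d), sPrev d s k = sPrevG 1 s k := fun _ _ => rfl
  simpa only [hset] using h
end

section
/- For every d ≥ 1 and fixed real numbers a_2,…,a_d, the function a_1 ↦ f_d(a_1, a_2, …, a_d) is a polynomial in a_1 of degree d with zero constant term, and the product a_1 a_2 ⋯ a_d divides f_d; precisely, f_d(a_1,…,a_d) = Σ_{k=1}^{d} f_{d,k}(a_2,…,a_d) a_1^k, where each coefficient f_{d,k}(a_2,…,a_d) is a polynomial in a_2,…,a_d having a_2 a_3 ⋯ a_d as a factor. -/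
open MeasureTheory Polynomial

noncomputable section AuxFd
open Polynomial

private lemma bern_coeff_self' (n : ℕ) : (Polynomial.bernoulli n).coeff n = 1 := by
  rw [Polynomial.bernoulli_def, Polynomial.finset_sum_coeff]
  rw [Finset.sum_eq_single n]
  · simp
  · intro b hb hbn; simp [Polynomial.coeff_monomial, hbn]
  · simp

private lemma bern_coeff_gt' (n j : ℕ) (h : n < j) : (Polynomial.bernoulli n).coeff j = 0 := by
  rw [Polynomial.bernoulli_def, Polynomial.finset_sum_coeff]
  apply Finset.sum_eq_zero
  intro b hb
  rw [Finset.mem_range] at hb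
  rw [Polynomial.coeff_monomial, if_neg (by omega)]

private lemma bernR_natDegree' (n : ℕ) : (bernR n).natDegree = n := by
  apply le_antisymm
  · apply Polynomial.natDegree_le_iff_coeff_eq_zero.2
    intro j hj
    rw [bernR, Polynomial.coeff_map, bern_coeff_gt' n j hj, map_zero]
  · apply Polynomial.le_natDegree_of_ne_zero
    rw [bernR, Polynomial.coeff_map, bern_coeff_self']
    simp

private lemma bernR_monic' (n : ℕ) : (bernR n).Monic := by
  rw [Polynomial.Monic, Polynomial.leadingCoeff, bernR_natDegree', bernR,
    Polynomial.coeff_map, bern_coeff_self']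
  simp

private lemma comp_natDegree' (n : ℕ) : ((bernR n).comp (X + 1)).natDegree = n := by
  have h1 : (X + 1 : ℝ[X]) = X + C 1 := by simp
  rw [Polynomial.natDegree_comp, bernR_natDegree', h1, Polynomial.natDegree_X_add_C, mul_one]

private lemma comp_monic' (n : ℕ) : ((bernR n).comp (X + 1)).Monic := by
  have h1 : (X + 1 : ℝ[X]) = X + C 1 := by simp
  apply (bernR_monic' n).comp
  · rw [h1]; exact Polynomial.monic_X_add_C 1
  · rw [h1, Polynomial.natDegree_X_add_C]; exact one_ne_zero

private lemma PkR_natDegree_le (m : ℕ) : (PkR m).natDegree ≤ m + 1 := by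
  apply le_trans (Polynomial.natDegree_mul_le)
  simp only [Polynomial.natDegree_C, zero_add]
  apply le_trans (Polynomial.natDegree_sub_le _ _)
  simp [comp_natDegree']

private lemma PkR_coeff_top (m : ℕ) : (PkR m).coeff (m + 1) = ((m:ℝ)+1)⁻¹ := by
  rw [PkR, Polynomial.coeff_C_mul, Polynomial.coeff_sub, Polynomial.coeff_C,
    if_neg (by omega)]
  have h : ((bernR (m+1)).comp (X + 1)).coeff (m+1) = 1 := by
    have h2 := comp_monic' (m+1)
    rw [Polynomial.Monic, Polynomial.leadingCoeff, comp_natDegree'] at h2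
    exact h2
  rw [h]; ring

private lemma PkR_coeff_zero (m : ℕ) (hm : 1 ≤ m) : (PkR m).coeff 0 = 0 := by
  rw [PkR, Polynomial.coeff_C_mul, Polynomial.coeff_sub, Polynomial.coeff_C, if_pos rfl]
  have h0 : ((bernR (m+1)).comp (X + 1)).coeff 0 = (bernR (m+1)).eval 1 := by
    rw [Polynomial.coeff_zero_eq_eval_zero, Polynomial.eval_comp]
    norm_num
  rw [h0]
  have h1 : (bernR (m+1)).eval 1 = (bernR (m+1)).eval 0 := by
    rw [bernR]
    rw [Polynomial.eval_map, Polynomial.eval_map]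
    rw [show ((1:ℝ)) = algebraMap ℚ ℝ 1 by simp, show ((0:ℝ)) = algebraMap ℚ ℝ 0 by simp]
    rw [Polynomial.eval₂_at_apply, Polynomial.eval₂_at_apply]
    rw [Polynomial.bernoulli_eval_one, Polynomial.bernoulli_eval_zero,
      bernoulli_eq_bernoulli'_of_ne_one (by omega)]
  rw [h1]; ring

private lemma extSumPoly_ext (h : Polynomial ℝ) (N : ℕ) (hN : h.natDegree ≤ N) :
    extSumPoly h = Polynomial.C (h.coeff 0) * Polynomial.X +
      ∑ k ∈ Finset.Icc 1 N, Polynomial.C (h.coeff k) * PkR k := by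
  rw [extSumPoly]
  congr 1
  apply Finset.sum_subset
  · exact Finset.Icc_subset_Icc_right hN
  · intro x hx hx2
    rw [Finset.mem_Icc] at hx hx2
    rw [Polynomial.coeff_eq_zero_of_natDegree_lt (by omega), map_zero, zero_mul]

private lemma aux_sum_coeff (n : ℕ) (b : Fin (n+1) → ℝ) (j : ℕ) :
    (∑ k : Fin (n+1), Polynomial.C (b k) * Polynomial.X ^ ((k:ℕ)+1)).coeff j
      = if hj : 1 ≤ j ∧ j ≤ n + 1 then b ⟨j - 1, by omega⟩ else 0 := by
  rw [Polynomial.finset_sum_coeff]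
  simp only [Polynomial.coeff_C_mul, Polynomial.coeff_X_pow]
  split
  · next hj =>
    rw [Finset.sum_eq_single (⟨j - 1, by omega⟩ : Fin (n+1))]
    · rw [if_pos (by simp; omega), mul_one]
    · intro k _ hk
      rw [if_neg, mul_zero]
      intro hkj
      exact hk (by apply Fin.ext; simp; omega)
    · simp
  · next hj =>
    apply Finset.sum_eq_zero
    intro k _
    rw [if_neg (by omega), mul_zero]

private lemma aux_sum_natDegree_le (n : ℕ) (b : Fin (n+1) → ℝ) :
    (∑ k : Fin (n+1), Polynomial.C (b k) * Polynomial.X ^ ((k:ℕ)+1)).natDegree ≤ n + 1 := by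
  apply Polynomial.natDegree_le_iff_coeff_eq_zero.2
  intro j hj
  rw [aux_sum_coeff, dif_neg (by omega)]

private lemma extSumPoly_sum (n : ℕ) (b : Fin (n+1) → ℝ) :
    extSumPoly (∑ k : Fin (n+1), Polynomial.C (b k) * Polynomial.X ^ ((k:ℕ)+1))
      = ∑ k : Fin (n+1), Polynomial.C (b k) * PkR ((k:ℕ)+1) := by
  rw [extSumPoly_ext _ (n+1) (aux_sum_natDegree_le n b), aux_sum_coeff, dif_neg (by omega),
    map_zero, zero_mul, zero_add]
  simp only [aux_sum_coeff]
  apply Finset.sum_bij' (fun (a : ℕ) (ha : a ∈ Finset.Icc 1 (n+1)) =>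
      (⟨a - 1, by rw [Finset.mem_Icc] at ha; omega⟩ : Fin (n+1)))
    (fun (k : Fin (n+1)) _ => (k : ℕ) + 1)
  case hi => intro a ha; simp
  case hj => intro a ha; simp only [Finset.mem_Icc]; omega
  case left_neg => intro a ha; simp only [Finset.mem_Icc] at ha; simp; omega
  case right_neg => intro a ha; apply Fin.ext; simp
  case h =>
    intro a ha
    simp only [Finset.mem_Icc] at ha
    dsimp only
    rw [dif_pos ha]
    congr 2
    omega

private lemma poly_expand (m : ℕ) (q : Polynomial ℝ) (h0 : q.coeff 0 = 0)
    (hd : q.natDegree ≤ m+1) :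
    q = ∑ j : Fin (m+1), Polynomial.C (q.coeff ((j:ℕ)+1)) * Polynomial.X^((j:ℕ)+1) := by
  ext j
  rw [aux_sum_coeff]
  split
  · next hj => congr 1; simp only [Fin.val_mk]; omega
  · next hj =>
    push_neg at hj
    rcases Nat.eq_zero_or_pos j with h | h
    · rw [h, h0]
    · exact Polynomial.coeff_eq_zero_of_natDegree_lt (by omega)

private lemma keyA (n : ℕ) : ∃ c : Fin (n+1) → MvPolynomial (Fin n) ℝ,
    (∀ k, (∏ i : Fin n, MvPolynomial.X i) ∣ c k) ∧
    (∀ a : ℕ → ℝ, fdPoly n a =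
       ∑ k : Fin (n+1), Polynomial.C (MvPolynomial.eval (fun i : Fin n => a (i:ℕ)) (c k))
         * Polynomial.X ^ ((k:ℕ)+1)) ∧
    (c (Fin.last n) = MvPolynomial.C (((Nat.factorial (n+1) : ℝ))⁻¹)
      * ∏ i : Fin n, MvPolynomial.X i ^ (n - (i:ℕ))) := by
  induction n with
  | zero =>
    refine ⟨fun _ => 1, ?_, ?_, ?_⟩
    · intro k; simp
    · intro a; simp [fdPoly]
    · simp [Nat.factorial]
  | succ n ih =>
    obtain ⟨c, hdvd, hrep, hlast⟩ := ih
    refine ⟨fun j =>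
      ∑ k : Fin (n+1), MvPolynomial.C ((PkR ((k:ℕ)+1)).coeff ((j:ℕ)+1))
        * MvPolynomial.X (0 : Fin (n+1)) ^ ((k:ℕ)+1)
        * MvPolynomial.rename Fin.succ (c k), ?_, ?_, ?_⟩
    · -- divisibility
      intro j
      apply Finset.dvd_sum
      intro k _
      have h1 : (∏ i : Fin (n+1), MvPolynomial.X i : MvPolynomial (Fin (n+1)) ℝ)
          = MvPolynomial.X 0 * ∏ i : Fin n, MvPolynomial.X (Fin.succ i) := by
        rw [Fin.prod_univ_succ]
      rw [h1]
      apply mul_dvd_mul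
      · exact Dvd.dvd.mul_left (dvd_pow_self _ (by omega)) _
      · have h2 : (∏ i : Fin n, MvPolynomial.X (Fin.succ i) : MvPolynomial (Fin (n+1)) ℝ)
            = MvPolynomial.rename Fin.succ (∏ i : Fin n, MvPolynomial.X i) := by
          simp [map_prod]
        rw [h2]
        exact map_dvd _ (hdvd k)
    · -- representation
      intro a
      set b : Fin (n+1) → ℝ := fun k =>
        (MvPolynomial.eval (fun i : Fin n => a ((i:ℕ)+1)) (c k)) * (a 0)^((k:ℕ)+1) with hb
      have hcomp : (fdPoly n (fun i => a (i + 1))).comp (Polynomial.C (a 0) * Polynomial.X)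
          = ∑ k : Fin (n+1), Polynomial.C (b k) * Polynomial.X ^ ((k:ℕ)+1) := by
        rw [hrep (fun i => a (i+1)), Polynomial.sum_comp]
        apply Finset.sum_congr rfl
        intro k _
        rw [Polynomial.mul_comp, Polynomial.C_comp, Polynomial.X_pow_comp, mul_pow,
          ← Polynomial.C_pow, ← mul_assoc, ← Polynomial.C_mul]
      have hstep : fdPoly (n+1) a = ∑ k : Fin (n+1), Polynomial.C (b k) * PkR ((k:ℕ)+1) := by
        show extSumPoly _ = _
        rw [hcomp, extSumPoly_sum]
      rw [hstep]
      have hexp : ∀ k : Fin (n+1), PkR ((k:ℕ)+1) =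
          ∑ j : Fin (n+2), Polynomial.C ((PkR ((k:ℕ)+1)).coeff ((j:ℕ)+1))
            * Polynomial.X^((j:ℕ)+1) := by
        intro k
        exact poly_expand (n+1) _ (PkR_coeff_zero _ (by omega))
          (le_trans (PkR_natDegree_le _) (by have := k.isLt; omega))
      calc ∑ k : Fin (n+1), Polynomial.C (b k) * PkR ((k:ℕ)+1)
          = ∑ k : Fin (n+1), ∑ j : Fin (n+2),
              Polynomial.C (b k * (PkR ((k:ℕ)+1)).coeff ((j:ℕ)+1)) * Polynomial.X^((j:ℕ)+1) := by
            apply Finset.sum_congr rfl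
            intro k _
            conv_lhs => rw [hexp k]
            rw [Finset.mul_sum]
            apply Finset.sum_congr rfl
            intro j _
            rw [← mul_assoc, ← Polynomial.C_mul]
        _ = ∑ j : Fin (n+2), ∑ k : Fin (n+1),
              Polynomial.C (b k * (PkR ((k:ℕ)+1)).coeff ((j:ℕ)+1)) * Polynomial.X^((j:ℕ)+1) :=
            Finset.sum_comm
        _ = ∑ j : Fin (n+2),
              Polynomial.C (∑ k : Fin (n+1), b k * (PkR ((k:ℕ)+1)).coeff ((j:ℕ)+1))
                * Polynomial.X^((j:ℕ)+1) := by
            apply Finset.sum_congr rfl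
            intro j _
            rw [← Finset.sum_mul, ← map_sum]
        _ = _ := by
            beta_reduce
            apply Finset.sum_congr rfl
            intro j _
            have heval : MvPolynomial.eval (fun i : Fin (n+1) => a (i:ℕ))
                (∑ k : Fin (n+1), MvPolynomial.C ((PkR ((k:ℕ)+1)).coeff ((j:ℕ)+1))
                  * MvPolynomial.X (0 : Fin (n+1)) ^ ((k:ℕ)+1) * MvPolynomial.rename Fin.succ (c k))
                = ∑ k : Fin (n+1), b k * (PkR ((k:ℕ)+1)).coeff ((j:ℕ)+1) := by
              rw [map_sum]
              apply Finset.sum_congr rfl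
              intro k _
              rw [map_mul, map_mul, MvPolynomial.eval_C, map_pow, MvPolynomial.eval_X,
                MvPolynomial.eval_rename]
              have hcom : ((fun i : Fin (n+1) => a (i:ℕ)) ∘ Fin.succ)
                  = (fun i : Fin n => a ((i:ℕ)+1)) := by
                funext i; simp
              rw [hcom, hb]
              show _ = _ * a ((0 : Fin (n+1)) : ℕ) ^ _ * _
              simp only [Fin.val_zero]
              ring
            rw [heval]
    · -- last coefficient
      beta_reduce
      rw [Finset.sum_eq_single (Fin.last n)]
      · rw [hlast]
        have hco : (PkR (((Fin.last n : Fin (n+1)):ℕ)+1)).coeff (((Fin.last (n+1) : Fin (n+2)):ℕ)+1)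
            = ((n:ℝ)+2)⁻¹ := by
          simp only [Fin.val_last]
          have h := PkR_coeff_top (n+1)
          rw [show n+1+1 = n+2 from rfl] at h
          rw [h]
          push_cast
          ring_nf
        rw [hco, map_mul, MvPolynomial.rename_C, map_prod]
        simp only [map_pow, MvPolynomial.rename_X, Fin.val_last]
        have hprod : (∏ i : Fin (n+1), (MvPolynomial.X i : MvPolynomial (Fin (n+1)) ℝ) ^ (n + 1 - (i:ℕ)))
            = MvPolynomial.X 0 ^ (n+1) * ∏ i : Fin n, MvPolynomial.X (Fin.succ i) ^ (n - (i:ℕ)) := by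
          rw [Fin.prod_univ_succ]
          simp only [Fin.val_zero, Fin.val_succ, Nat.sub_zero]
          congr 1
          apply Finset.prod_congr rfl
          intro i _
          congr 1
          omega
        rw [hprod]
        have hfac : ((Nat.factorial (n+1+1) : ℝ))⁻¹ = (((n:ℝ))+2)⁻¹ * ((Nat.factorial (n+1) : ℝ))⁻¹ := by
          rw [show Nat.factorial (n+1+1) = (n+2) * Nat.factorial (n+1) from rfl]
          push_cast
          rw [mul_inv]
        rw [hfac, map_mul]
        ring
      · intro k _ hk
        have hdeg : (PkR ((k:ℕ)+1)).coeff (((Fin.last (n+1) : Fin (n+2)):ℕ)+1) = 0 := by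
          apply Polynomial.coeff_eq_zero_of_natDegree_lt
          apply lt_of_le_of_lt (PkR_natDegree_le _)
          have hkn : (k:ℕ) < n := by
            have := k.isLt
            rcases Nat.lt_or_ge (k:ℕ) n with h | h
            · exact h
            · exfalso; exact hk (by apply Fin.ext; simp [Fin.last]; omega)
          simp [Fin.last]; omega
        rw [hdeg]
        simp
      · simp


end AuxFd

theorem fd_is_polynomial_with_factor
    (d : ℕ) (hd : 1 ≤ d) :
    ∃ c : Fin d → MvPolynomial (Fin (d - 1)) ℝ,
      (∀ k : Fin d, (∏ i : Fin (d - 1), MvPolynomial.X i) ∣ c k)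
      ∧ (∀ a : ℕ → ℝ,
          fd d a = ∑ k : Fin d,
            MvPolynomial.eval (fun i : Fin (d - 1) => a ((i : ℕ) + 1)) (c k)
              * a 0 ^ ((k : ℕ) + 1))
      ∧ (∀ a : ℕ → ℝ, (∀ i : ℕ, 1 ≤ i → i ≤ d - 1 → a i ≠ 0) →
          (fdPoly (d - 1) (fun i => a (i + 1))).natDegree = d) := by
  obtain ⟨n, rfl⟩ : ∃ n, d = n + 1 := ⟨d - 1, by omega⟩
  obtain ⟨c, hdvd, hrep, hlast⟩ := keyA n
  refine ⟨c, hdvd, ?_, ?_⟩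
  · intro a
    show (fdPoly n (fun i => a (i + 1))).eval (a 0) = _
    rw [hrep (fun i => a (i+1))]
    rw [Polynomial.eval_finset_sum]
    apply Finset.sum_congr rfl
    intro k _
    simp
  · intro a ha
    show (fdPoly n (fun i => a (i + 1))).natDegree = n + 1
    rw [hrep (fun i => a (i+1))]
    set b : Fin (n+1) → ℝ := fun k =>
      MvPolynomial.eval (fun i : Fin n => (fun i => a (i + 1)) (i:ℕ)) (c k) with hbdef
    have hb_last : b (Fin.last n) ≠ 0 := by
      rw [hbdef]
      simp only [hlast]
      rw [map_mul, MvPolynomial.eval_C, map_prod]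
      apply mul_ne_zero
      · simp [Nat.factorial_ne_zero]
      · apply Finset.prod_ne_zero_iff.2
        intro i _
        rw [map_pow, MvPolynomial.eval_X]
        apply pow_ne_zero
        exact ha ((i:ℕ)+1) (by omega) (by have := i.isLt; omega)
    apply le_antisymm
    · exact aux_sum_natDegree_le n b
    · apply Polynomial.le_natDegree_of_ne_zero
      rw [aux_sum_coeff, dif_pos (by omega)]
      have : (⟨n + 1 - 1, by omega⟩ : Fin (n+1)) = Fin.last n := by
        apply Fin.ext; simp
      rw [this]
      exact hb_last
end

section
/- For every d ≥ 2 and every (a_1, a_2, …, a_d) ∈ ℝ^d, the function f_d satisfies f_d(a_1, a_2, a_3, …, a_d) = −f_d(−a_1 − 1, −a_2, a_3, …, a_d). -/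
open MeasureTheory Polynomial

-- bernoulli polynomial identity over ℚ[X]
lemma bern_comp_one_add (n : ℕ) :
    (Polynomial.bernoulli n).comp (1 + Polynomial.X) =
      Polynomial.bernoulli n + (n : ℚ[X]) * Polynomial.X ^ (n - 1) := by
  apply Polynomial.funext
  intro x
  simp [Polynomial.eval_comp, Polynomial.bernoulli_eval_one_add]

lemma bernR_eval_one_add (n : ℕ) (x : ℝ) :
    (bernR n).eval (1 + x) = (bernR n).eval x + n * x ^ (n - 1) := by
  have h := congrArg (Polynomial.map (algebraMap ℚ ℝ)) (bern_comp_one_add n)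
  rw [Polynomial.map_comp] at h
  have := congrArg (Polynomial.eval x) h
  simpa [bernR, Polynomial.eval_comp] using this

lemma PkR_diff (k : ℕ) (u : ℝ) :
    (PkR k).eval u - (PkR k).eval (u - 1) = u ^ k := by
  have hk : ((k : ℝ) + 1) ≠ 0 := by positivity
  have e1 : (PkR k).eval u
      = ((k:ℝ)+1)⁻¹ * ((bernR (k+1)).eval (u+1) - (bernR (k+1)).eval 0) := by
    simp [PkR, Polynomial.eval_comp]
  have e2 : (PkR k).eval (u-1)
      = ((k:ℝ)+1)⁻¹ * ((bernR (k+1)).eval u - (bernR (k+1)).eval 0) := by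
    simp [PkR, Polynomial.eval_comp]
  rw [e1, e2]
  have h : (bernR (k+1)).eval (u+1) = (bernR (k+1)).eval u + ((k:ℝ)+1) * u ^ k := by
    rw [add_comm u 1, bernR_eval_one_add]
    norm_num
  rw [h]
  field_simp
  ring

lemma PkR_eval_zero (k : ℕ) (hk : 1 ≤ k) : (PkR k).eval 0 = 0 := by
  have hq : (Polynomial.bernoulli (k+1)).eval 1 = (Polynomial.bernoulli (k+1)).eval 0 := by
    rw [Polynomial.bernoulli_eval_one, Polynomial.bernoulli_eval_zero,
      bernoulli_eq_bernoulli'_of_ne_one (by omega)]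
  have h1 : (bernR (k+1)).eval 1 = (bernR (k+1)).eval 0 := by
    rw [show (1:ℝ) = algebraMap ℚ ℝ 1 by norm_num,
      show (0:ℝ) = algebraMap ℚ ℝ 0 by norm_num, bernR,
      Polynomial.eval_map, Polynomial.eval_map,
      Polynomial.eval₂_at_apply, Polynomial.eval₂_at_apply, hq]
  simp [PkR, Polynomial.eval_comp, h1]

lemma extSumPoly_eval_zero (h : Polynomial ℝ) : (extSumPoly h).eval 0 = 0 := by
  unfold extSumPoly
  rw [Polynomial.eval_add, Polynomial.eval_finset_sum]
  simp only [Polynomial.eval_mul, Polynomial.eval_C, Polynomial.eval_X, mul_zero, zero_add]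
  apply Finset.sum_eq_zero
  intro k hk
  rw [PkR_eval_zero k (Finset.mem_Icc.mp hk).1, mul_zero]

lemma extSumPoly_diff (h : Polynomial ℝ) (u : ℝ) :
    (extSumPoly h).eval u - (extSumPoly h).eval (u - 1) = h.eval u := by
  unfold extSumPoly
  rw [Polynomial.eval_add, Polynomial.eval_add, Polynomial.eval_finset_sum,
    Polynomial.eval_finset_sum]
  simp only [Polynomial.eval_mul, Polynomial.eval_C, Polynomial.eval_X]
  rw [Polynomial.eval_eq_sum_range]
  have hins : Finset.range (h.natDegree + 1) = insert 0 (Finset.Icc 1 h.natDegree) := by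
    ext x; simp [Finset.mem_range, Finset.mem_Icc]; omega
  rw [hins, Finset.sum_insert (by simp)]
  have key : (∑ x ∈ Finset.Icc 1 h.natDegree, h.coeff x * (PkR x).eval u)
      - (∑ x ∈ Finset.Icc 1 h.natDegree, h.coeff x * (PkR x).eval (u - 1))
      = ∑ x ∈ Finset.Icc 1 h.natDegree, h.coeff x * u ^ x := by
    rw [← Finset.sum_sub_distrib]
    exact Finset.sum_congr rfl fun k _ => by rw [← mul_sub, PkR_diff]
  linear_combination key

lemma poly_unique (p q : Polynomial ℝ) (h0 : p.eval 0 = q.eval 0)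
    (hdiff : ∀ u : ℝ, p.eval u - p.eval (u - 1) = q.eval u - q.eval (u - 1)) : p = q := by
  set r := p - q with hr
  have hstep : ∀ u : ℝ, r.eval u = r.eval (u - 1) := by
    intro u
    have := hdiff u
    simp only [hr, Polynomial.eval_sub]
    linarith
  have hn : ∀ n : ℕ, r.eval (n : ℝ) = r.eval 0 := by
    intro n
    induction n with
    | zero => simp
    | succ m ih =>
      have h := hstep ((m : ℝ) + 1)
      push_cast
      rw [h, add_sub_cancel_right, ih]
  have hr0 : r.eval 0 = 0 := by simp [hr, Polynomial.eval_sub, h0]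
  have hzero : r = 0 := by
    apply Polynomial.eq_zero_of_infinite_isRoot
    apply Set.Infinite.mono (s := Set.range (fun n : ℕ => (n : ℝ)))
    · rintro x ⟨m, rfl⟩
      simp [Polynomial.IsRoot, hn m, hr0]
    · exact Set.infinite_range_of_injective Nat.cast_injective
  have := sub_eq_zero.mp hzero
  exact this

lemma extSumPoly_reflect (p : Polynomial ℝ) (hp0 : p.eval 0 = 0) (u : ℝ) :
    (extSumPoly p).eval u = -(extSumPoly (p.comp (-Polynomial.X))).eval (-u - 1) := by
  set S' := extSumPoly (p.comp (-Polynomial.X)) with hS'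
  have hS'0 : S'.eval 0 = 0 := extSumPoly_eval_zero _
  have hS'm1 : S'.eval (-1) = 0 := by
    have h := extSumPoly_diff (p.comp (-Polynomial.X)) 0
    rw [← hS'] at h
    simp [Polynomial.eval_comp, hp0, hS'0] at h
    linarith
  have main : extSumPoly p = -(S'.comp (-Polynomial.X - 1)) := by
    apply poly_unique
    · rw [extSumPoly_eval_zero]
      simp [Polynomial.eval_comp, hS'm1]
    · intro v
      rw [extSumPoly_diff]
      simp only [Polynomial.eval_neg, Polynomial.eval_comp, Polynomial.eval_sub,
        Polynomial.eval_neg, Polynomial.eval_X, Polynomial.eval_one]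
      have h := extSumPoly_diff (p.comp (-Polynomial.X)) (-v)
      rw [← hS'] at h
      simp only [Polynomial.eval_comp, Polynomial.eval_neg, Polynomial.eval_X, neg_neg] at h
      have e : -(v - 1) - 1 = -v := by ring
      rw [e]
      linarith
  rw [main]
  simp only [Polynomial.eval_neg, Polynomial.eval_comp, Polynomial.eval_sub,
    Polynomial.eval_neg, Polynomial.eval_X, Polynomial.eval_one]


lemma fdPoly_eval_zero : ∀ (n : ℕ) (a : ℕ → ℝ), (fdPoly n a).eval 0 = 0
  | 0, _ => by simp [fdPoly]
  | n + 1, a => by rw [fdPoly]; exact extSumPoly_eval_zero _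

lemma comp_neg_aux (q : Polynomial ℝ) (c : ℝ) :
    (q.comp (Polynomial.C c * Polynomial.X)).comp (-Polynomial.X)
      = q.comp (Polynomial.C (-c) * Polynomial.X) := by
  rw [Polynomial.comp_assoc]
  congr 1
  simp [Polynomial.mul_comp]

theorem fd_reflection (d : ℕ) (hd : 2 ≤ d) (a : ℕ → ℝ) :
    fd d a = -fd d (fun i => if i = 0 then -a 0 - 1 else if i = 1 then -a 1 else a i) := by
  obtain ⟨n, rfl⟩ : ∃ n, d = n + 2 := ⟨d - 2, by omega⟩
  have hfd : ∀ (c : ℕ → ℝ), fd (n + 2) c =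
      (extSumPoly ((fdPoly n (fun i => c (i + 2))).comp
        (Polynomial.C (c 1) * Polynomial.X))).eval (c 0) := by
    intro c
    rfl
  rw [hfd, hfd]
  have h2 : (fun i => (fun j => if j = 0 then -a 0 - 1 else if j = 1 then -a 1 else a j) (i + 2))
      = fun i => a (i + 2) := by
    funext i; simp
  rw [h2]
  norm_num
  set q := fdPoly n fun i => a (i + 2) with hq
  have hp0 : (q.comp (Polynomial.C (a 1) * Polynomial.X)).eval 0 = 0 := by
    simp [Polynomial.eval_comp, hq, fdPoly_eval_zero]
  have key := extSumPoly_reflect (q.comp (Polynomial.C (a 1) * Polynomial.X)) hp0 (a 0)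
  rw [comp_neg_aux] at key
  rw [key]
  simp [map_neg, neg_mul]
end

section
/- Let v_1,…,v_{d+1} ∈ ℝ^d be the vertices of a d-simplex in general position, and set x̂_{i,j} = x_{i,j} − x_{d+1,j} for 1 ≤ i ≤ d, 1 ≤ j ≤ d. Then Σ_{σ ∈ S_d} sign(σ) · ∏_{j=1}^{d} ẑ(σ,j) = (−1)^{d(d−1)/2} · det X̂(𝟏,d), where 𝟏 is the identity permutation. -/
open MeasureTheory Polynomial

namespace ZZ



def rsel {n : ℕ} (σ : Equiv.Perm (Fin n)) : ℕ → ℕ :=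
  fun p => if h : p < n then ((σ ⟨p, h⟩ : Fin n) : ℕ) else 0

def Ad (M : ℕ → ℕ → ℝ) (r : ℕ → ℕ) (k : ℕ) : ℝ :=
  (Matrix.of fun p q : Fin k => M (r (p : ℕ)) (q : ℕ)).det

def Bd (M : ℕ → ℕ → ℝ) (r : ℕ → ℕ) (k : ℕ) : ℝ :=
  (Matrix.of fun p q : Fin k => if (q : ℕ) = 0 then 1 else M (r (p : ℕ)) ((q : ℕ) - 1)).det

lemma Ad_congr {M : ℕ → ℕ → ℝ} {r r' : ℕ → ℕ} {k : ℕ} (h : ∀ p < k, r p = r' p) :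
    Ad M r k = Ad M r' k := by
  unfold Ad; congr 1; ext p q; simp only [Matrix.of_apply]; rw [h p p.isLt]

lemma Bd_congr {M : ℕ → ℕ → ℝ} {r r' : ℕ → ℕ} {k : ℕ} (h : ∀ p < k, r p = r' p) :
    Bd M r k = Bd M r' k := by
  unfold Bd; congr 1; ext p q; simp only [Matrix.of_apply]; rw [h p p.isLt]

/-- the permutation of `Fin (n+1)` sending `castSucc i ↦ m.succAbove (τ i)` and `last ↦ m`. -/
def insP {n : ℕ} (m : Fin (n + 1)) (τ : Equiv.Perm (Fin n)) : Equiv.Perm (Fin (n + 1)) :=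
  (finSuccEquivLast.trans (Equiv.optionCongr τ)).trans (finSuccEquiv' m).symm

@[simp] lemma insP_castSucc {n : ℕ} (m : Fin (n + 1)) (τ : Equiv.Perm (Fin n)) (i : Fin n) :
    insP m τ (Fin.castSucc i) = m.succAbove (τ i) := by
  simp [insP, finSuccEquivLast_castSucc, finSuccEquiv'_symm_some]

@[simp] lemma insP_last {n : ℕ} (m : Fin (n + 1)) (τ : Equiv.Perm (Fin n)) :
    insP m τ (Fin.last n) = m := by
  simp [insP, finSuccEquivLast_last, finSuccEquiv'_symm_none]

lemma insP_bijective (n : ℕ) :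
    Function.Bijective (fun x : Fin (n + 1) × Equiv.Perm (Fin n) => insP x.1 x.2) := by
  rw [Fintype.bijective_iff_injective_and_card]
  constructor
  · rintro ⟨m, τ⟩ ⟨m', τ'⟩ h
    simp only at h
    have hm : m = m' := by
      have := congrArg (fun σ : Equiv.Perm (Fin (n+1)) => σ (Fin.last n)) h
      simpa using this
    subst hm
    have hτ : τ = τ' := by
      ext i
      have := congrArg (fun σ : Equiv.Perm (Fin (n+1)) => σ (Fin.castSucc i)) h
      simp only [insP_castSucc] at this
      exact congrArg Fin.val (Fin.succAbove_right_injective this)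
    simp [hτ]
  · simp [Fintype.card_perm, Nat.factorial_succ]

lemma insP_decomp {n : ℕ} (m : Fin (n + 1)) (τ : Equiv.Perm (Fin n)) :
    insP m τ = insP m 1 * insP (Fin.last n) τ := by
  ext j
  refine Fin.lastCases ?_ (fun i => ?_) j <;> simp [Fin.succAbove_last_apply]

lemma sign_insP_last {n : ℕ} (τ : Equiv.Perm (Fin n)) :
    Equiv.Perm.sign (insP (Fin.last n) τ) = Equiv.Perm.sign τ := by
  have hf : ∀ i : Fin n, ((Fin.castSucc i : Fin (n+1)) : ℕ) < n := fun i => i.isLt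
  let f : Fin n ≃ {j : Fin (n + 1) // (j : ℕ) < n} :=
    { toFun := fun i => ⟨Fin.castSucc i, i.isLt⟩
      invFun := fun j => ⟨(j : Fin (n+1)) , j.2⟩
      left_inv := fun i => by simp
      right_inv := fun j => by
        ext
        simp [Fin.castSucc, Fin.castAdd, Fin.castLE] }
  have : insP (Fin.last n) τ = τ.extendDomain f := by
    ext j
    refine Fin.lastCases ?_ (fun i => ?_) j
    · rw [insP_last, Equiv.Perm.extendDomain_apply_not_subtype]
      simp
    · rw [insP_castSucc, Fin.succAbove_last_apply]
      have : (Fin.castSucc i : Fin (n+1)) = (f i : Fin (n+1)) := rfl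
      rw [this, Equiv.Perm.extendDomain_apply_image]
      rfl
  rw [this, Equiv.Perm.sign_extendDomain]

lemma insP_one_last {n : ℕ} : insP (Fin.last n) (1 : Equiv.Perm (Fin n)) = 1 := by
  ext j
  refine Fin.lastCases ?_ (fun i => ?_) j <;> simp [Fin.succAbove_last_apply]

lemma insP_one_castSucc {n : ℕ} (m : Fin n) :
    insP (Fin.castSucc m) (1 : Equiv.Perm (Fin n)) =
      Equiv.swap (Fin.castSucc m) m.succ * insP m.succ (1 : Equiv.Perm (Fin n)) := by
  ext j
  refine Fin.lastCases ?_ (fun i => ?_) j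
  · simp [Equiv.swap_apply_def, Fin.ext_iff]
  · simp only [Equiv.Perm.mul_apply, insP_castSucc, Equiv.Perm.one_apply]
    rcases lt_trichotomy (i : ℕ) (m : ℕ) with h | h | h
    · rw [Fin.succAbove_castSucc_of_lt m i h, Fin.succAbove_succ_of_le m i (le_of_lt h),
        Equiv.swap_apply_of_ne_of_ne] <;>
        · simp only [ne_eq, Fin.ext_iff, Fin.coe_castSucc, Fin.val_succ]; omega
    · have hi : i = m := Fin.ext h
      subst hi
      rw [Fin.succAbove_castSucc_of_le i i le_rfl, Fin.succAbove_succ_of_le i i le_rfl,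
        Equiv.swap_apply_left]
    · rw [Fin.succAbove_castSucc_of_le m i (le_of_lt h), Fin.succAbove_succ_of_lt m i h,
        Equiv.swap_apply_of_ne_of_ne] <;>
        · simp only [ne_eq, Fin.ext_iff, Fin.coe_castSucc, Fin.val_succ]; omega

lemma sign_insP_one {n : ℕ} (m : Fin (n + 1)) :
    Equiv.Perm.sign (insP m (1 : Equiv.Perm (Fin n))) = (-1) ^ (n - (m : ℕ)) := by
  induction m using Fin.reverseInduction with
  | last => simp [insP_one_last]
  | cast m ih =>
      rw [insP_one_castSucc, _root_.map_mul, Equiv.Perm.sign_swap (Fin.castSucc_lt_succ : Fin.castSucc m < m.succ).ne, ih]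
      have h : n - (Fin.castSucc m : ℕ) = (n - ((m.succ : Fin (n+1)) : ℕ)) + 1 := by
        simp [Fin.val_succ]; omega
      rw [h, pow_succ]
      exact mul_comm _ _
def Nm (M : ℕ → ℕ → ℝ) {n : ℕ} (m : Fin (n + 1)) : ℕ → ℕ → ℝ :=
  fun p q => if h : p < n then M ((m.succAbove ⟨p, h⟩ : Fin (n + 1)) : ℕ) q else 0

lemma rsel_insP {n : ℕ} (m : Fin (n + 1)) (τ : Equiv.Perm (Fin n)) (p : ℕ) (hp : p < n) :
    rsel (insP m τ) p = ((m.succAbove (τ ⟨p, hp⟩) : Fin (n + 1)) : ℕ) := by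
  unfold rsel
  rw [dif_pos (by omega : p < n + 1)]
  have h : (⟨p, by omega⟩ : Fin (n + 1)) = Fin.castSucc ⟨p, hp⟩ := rfl
  rw [h, insP_castSucc]

lemma Ad_insP {n : ℕ} (M : ℕ → ℕ → ℝ) (m : Fin (n + 1)) (τ : Equiv.Perm (Fin n)) {j : ℕ}
    (hj : j ≤ n) : Ad M (rsel (insP m τ)) j = Ad (Nm M m) (rsel τ) j := by
  unfold Ad
  congr 1
  ext p q
  have hp : (p : ℕ) < n := lt_of_lt_of_le p.isLt hj
  simp only [Matrix.of_apply]
  rw [rsel_insP m τ p hp]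
  unfold Nm rsel
  rw [dif_pos hp, dif_pos (τ ⟨p, hp⟩).isLt]

lemma Bd_insP {n : ℕ} (M : ℕ → ℕ → ℝ) (m : Fin (n + 1)) (τ : Equiv.Perm (Fin n)) {j : ℕ}
    (hj : j ≤ n) : Bd M (rsel (insP m τ)) j = Bd (Nm M m) (rsel τ) j := by
  unfold Bd
  congr 1
  ext p q
  have hp : (p : ℕ) < n := lt_of_lt_of_le p.isLt hj
  simp only [Matrix.of_apply]
  rcases Nat.eq_zero_or_pos (q : ℕ) with hq | hq
  · rw [if_pos hq, if_pos hq]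
  · rw [if_neg (by omega), if_neg (by omega), rsel_insP m τ p hp]
    unfold Nm rsel
    rw [dif_pos hp, dif_pos (τ ⟨p, hp⟩).isLt]

lemma Ad_top {n : ℕ} (M : ℕ → ℕ → ℝ) (m : Fin (n + 1)) (τ : Equiv.Perm (Fin n)) :
    Ad M (rsel (insP m τ)) n
      = ((Equiv.Perm.sign τ : ℤ) : ℝ) * Ad (Nm M m) (fun p => p) n := by
  unfold Ad
  have h : (Matrix.of fun p q : Fin n => M (rsel (insP m τ) (p : ℕ)) (q : ℕ))
      = (Matrix.of fun p q : Fin n => (Nm M m) ((p : Fin n) : ℕ) (q : ℕ)).submatrix τ id := by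
    ext p q
    simp only [Matrix.of_apply, Matrix.submatrix_apply, id]
    rw [rsel_insP m τ p p.isLt]
    unfold Nm
    rw [dif_pos (τ p).isLt]
  rw [h, Matrix.det_permute]

lemma Bd_full {n : ℕ} (M : ℕ → ℕ → ℝ) (σ : Equiv.Perm (Fin (n + 1))) :
    Bd M (rsel σ) (n + 1)
      = ((Equiv.Perm.sign σ : ℤ) : ℝ) * Bd M (fun p => p) (n + 1) := by
  unfold Bd
  have h : (Matrix.of fun p q : Fin (n+1) => if (q:ℕ) = 0 then (1:ℝ) else M (rsel σ (p:ℕ)) ((q:ℕ)-1))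
      = (Matrix.of fun p q : Fin (n+1) =>
          if (q:ℕ) = 0 then (1:ℝ) else M ((fun p => p) ((p : Fin (n+1)) : ℕ)) ((q:ℕ)-1)).submatrix σ id := by
    ext p q
    simp only [Matrix.of_apply, Matrix.submatrix_apply, id]
    rcases Nat.eq_zero_or_pos (q : ℕ) with hq | hq
    · rw [if_pos hq, if_pos hq]
    · rw [if_neg (by omega), if_neg (by omega)]
      unfold rsel
      rw [dif_pos p.isLt]
  rw [h, Matrix.det_permute]

lemma dB_expand {n : ℕ} (M : ℕ → ℕ → ℝ) :
    Bd M (fun p => p) (n + 1)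
      = ∑ m : Fin (n + 1), (-1 : ℝ) ^ (m : ℕ) * Ad (Nm M m) (fun p => p) n := by
  unfold Bd
  rw [Matrix.det_succ_column_zero]
  refine Finset.sum_congr rfl fun m _ => ?_
  have h0 : (Matrix.of fun p q : Fin (n+1) =>
      if (q:ℕ) = 0 then (1:ℝ) else M ((p:ℕ)) ((q:ℕ)-1)) m 0 = 1 := by
    simp
  rw [h0, mul_one]
  congr 1
  unfold Ad
  congr 1
  ext p q
  simp only [Matrix.submatrix_apply, Matrix.of_apply, Fin.val_succ]
  rw [if_neg (by omega)]
  unfold Nm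
  rw [dif_pos p.isLt]
  rfl


lemma sign_insP {n : ℕ} (m : Fin (n + 1)) (τ : Equiv.Perm (Fin n)) :
    Equiv.Perm.sign (insP m τ) = (-1) ^ (n - (m : ℕ)) * Equiv.Perm.sign τ := by
  rw [insP_decomp, _root_.map_mul, sign_insP_one, sign_insP_last]

lemma neg_one_pow_sub {k : ℕ} (m : ℕ) (hm : m ≤ k) :
    (-1 : ℝ) ^ (k - m) = (-1 : ℝ) ^ k * (-1 : ℝ) ^ m := by
  have h1 : (-1 : ℝ) ^ (k - m) * (-1 : ℝ) ^ m = (-1 : ℝ) ^ k := by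
    rw [← pow_add]; congr 1; omega
  have h2 : (-1 : ℝ) ^ m * (-1 : ℝ) ^ m = 1 := by
    rw [← pow_add]; exact Even.neg_one_pow ⟨m, rfl⟩
  linear_combination ((-1 : ℝ) ^ m) * h1 - ((-1 : ℝ) ^ (k - m)) * h2

lemma coreAux : ∀ (n : ℕ) (M : ℕ → ℕ → ℝ),
    (∀ k, k ≤ n → ∀ r : ℕ → ℕ, (∀ p, p < k → r p < n) →
      (∀ p p', p < k → p' < k → r p = r p' → p = p') → Bd M r k ≠ 0) →
    ∑ σ : Equiv.Perm (Fin n),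
        ∏ i ∈ Finset.range (n - 1), (Ad M (rsel σ) (i + 1) / Bd M (rsel σ) (i + 2))
      = (-1 : ℝ) ^ (n * (n - 1) / 2) := by
  intro n
  induction n with
  | zero => intro M _; simp
  | succ n ih =>
    intro M hB
    rcases n with _ | k
    · simp
    · -- dimension k + 2
      have hdB : Bd M (fun p => p) (k + 2) ≠ 0 :=
        hB (k + 2) le_rfl (fun p => p) (fun p hp => hp) (fun _ _ _ _ h => h)
      have hbN : ∀ m : Fin (k + 2), ∀ k', k' ≤ k + 1 → ∀ r : ℕ → ℕ,
          (∀ p, p < k' → r p < k + 1) →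
          (∀ p p', p < k' → p' < k' → r p = r p' → p = p') → Bd (Nm M m) r k' ≠ 0 := by
        intro m k' hk' r hlt hinj
        have hEq : Bd (Nm M m) r k'
            = Bd M (fun p => if h : r p < k + 1
                then ((m.succAbove ⟨r p, h⟩ : Fin (k + 2)) : ℕ) else 0) k' := by
          unfold Bd
          congr 1
          ext p q
          simp only [Matrix.of_apply]
          rcases Nat.eq_zero_or_pos (q : ℕ) with hq | hq
          · rw [if_pos hq, if_pos hq]
          · rw [if_neg (by omega), if_neg (by omega)]
            unfold Nm
            rw [dif_pos (hlt p p.isLt), dif_pos (hlt p p.isLt)]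
        rw [hEq]
        refine hB k' (by omega) _ (fun p hp => ?_) (fun p p' hp hp' h => ?_)
        · rw [dif_pos (hlt p hp)]
          exact (m.succAbove ⟨r p, hlt p hp⟩).isLt
        · rw [dif_pos (hlt p hp), dif_pos (hlt p' hp')] at h
          refine hinj p p' hp hp' ?_
          have h2 := Fin.succAbove_right_injective (p := m) (Fin.val_injective h)
          exact congrArg Fin.val h2
      have hterm : ∀ (m : Fin (k + 2)) (τ : Equiv.Perm (Fin (k + 1))),
          (∏ i ∈ Finset.range (k + 2 - 1),
              (Ad M (rsel (insP m τ)) (i + 1) / Bd M (rsel (insP m τ)) (i + 2)))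
          = (∏ i ∈ Finset.range k,
              (Ad (Nm M m) (rsel τ) (i + 1) / Bd (Nm M m) (rsel τ) (i + 2)))
            * ((-1 : ℝ) ^ (k + 1 - (m : ℕ))
                * (Ad (Nm M m) (fun p => p) (k + 1) / Bd M (fun p => p) (k + 2))) := by
        intro m τ
        have h1 : k + 2 - 1 = k + 1 := rfl
        rw [h1, Finset.prod_range_succ]
        congr 1
        · refine Finset.prod_congr rfl fun i hi => ?_
          have hik : i < k := Finset.mem_range.mp hi
          rw [Ad_insP M m τ (by omega), Bd_insP M m τ (by omega)]
        · rw [Ad_top, Bd_full, sign_insP]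
          set s : ℝ := ((Equiv.Perm.sign τ : ℤ) : ℝ) with hs
          set e : ℝ := (-1 : ℝ) ^ (k + 1 - (m : ℕ)) with he
          have hcast : ((((-1) ^ (k + 1 - (m : ℕ)) * Equiv.Perm.sign τ : ℤˣ) : ℤ) : ℝ)
              = e * s := by rw [he, hs]; push_cast; try ring
          rw [hcast]
          have hee : e * e = 1 := by
            rw [he, ← pow_add]; exact Even.neg_one_pow ⟨k + 1 - (m : ℕ), rfl⟩
          have hinv : e⁻¹ = e := inv_eq_of_mul_eq_one_right hee
          have hsne : s ≠ 0 := by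
            rcases Int.units_eq_one_or (Equiv.Perm.sign τ) with h | h <;> simp [hs, h]
          simp only [show k + 1 + 1 = k + 2 from rfl]
          rw [mul_assoc, div_eq_mul_inv, mul_inv, hinv, mul_inv, div_eq_mul_inv]
          have hss : s * s⁻¹ = 1 := mul_inv_cancel₀ hsne
          linear_combination (e * Ad (Nm M m) (fun p => p) (k + 1)
            * (Bd M (fun p => p) (k + 2))⁻¹) * hss
      calc
        ∑ σ : Equiv.Perm (Fin (k + 2)),
            ∏ i ∈ Finset.range (k + 2 - 1), (Ad M (rsel σ) (i + 1) / Bd M (rsel σ) (i + 2))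
          = ∑ x : Fin (k + 2) × Equiv.Perm (Fin (k + 1)),
            ∏ i ∈ Finset.range (k + 2 - 1),
              (Ad M (rsel (insP x.1 x.2)) (i + 1) / Bd M (rsel (insP x.1 x.2)) (i + 2)) :=
          (Fintype.sum_bijective _ (insP_bijective (k + 1)) _ _ (fun x => rfl)).symm
        _ = ∑ m : Fin (k + 2), ∑ τ : Equiv.Perm (Fin (k + 1)),
            (∏ i ∈ Finset.range k,
              (Ad (Nm M m) (rsel τ) (i + 1) / Bd (Nm M m) (rsel τ) (i + 2)))
            * ((-1 : ℝ) ^ (k + 1 - (m : ℕ))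
                * (Ad (Nm M m) (fun p => p) (k + 1) / Bd M (fun p => p) (k + 2))) := by
          rw [Fintype.sum_prod_type]
          exact Finset.sum_congr rfl fun m _ => Finset.sum_congr rfl fun τ _ => hterm m τ
        _ = ∑ m : Fin (k + 2), (-1 : ℝ) ^ ((k + 1) * k / 2)
            * ((-1 : ℝ) ^ (k + 1 - (m : ℕ))
                * (Ad (Nm M m) (fun p => p) (k + 1) / Bd M (fun p => p) (k + 2))) := by
          refine Finset.sum_congr rfl fun m _ => ?_
          rw [← Finset.sum_mul]
          congr 1
          have := ih (Nm M m) (hbN m)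
          simpa using this
        _ = (-1 : ℝ) ^ ((k + 1) * k / 2) * (-1 : ℝ) ^ (k + 1)
            * ((∑ m : Fin (k + 2), (-1 : ℝ) ^ (m : ℕ) * Ad (Nm M m) (fun p => p) (k + 1))
                / Bd M (fun p => p) (k + 2)) := by
          rw [Finset.sum_div, Finset.mul_sum]
          refine Finset.sum_congr rfl fun m _ => ?_
          rw [neg_one_pow_sub (m : ℕ) (by omega : (m : ℕ) ≤ k + 1)]
          rw [div_eq_mul_inv, div_eq_mul_inv]
          ring
        _ = (-1 : ℝ) ^ ((k + 1) * k / 2) * (-1 : ℝ) ^ (k + 1) := by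
          rw [← dB_expand M, div_self hdB, mul_one]
        _ = (-1 : ℝ) ^ ((k + 2) * (k + 2 - 1) / 2) := by
          have harith : (k + 2) * (k + 2 - 1) / 2 = (k + 1) * k / 2 + (k + 1) := by
            have h2 : (k + 2) * (k + 2 - 1) = (k + 1) * k + (k + 1) * 2 := by
              show (k + 2) * (k + 1) = _
              ring
            rw [h2, Nat.add_mul_div_right _ _ (by norm_num : 0 < 2)]
          rw [harith, pow_add]
          ring


lemma Ad_perm {n : ℕ} (M : ℕ → ℕ → ℝ) (σ : Equiv.Perm (Fin n)) :
    Ad M (rsel σ) n = ((Equiv.Perm.sign σ : ℤ) : ℝ) * Ad M (fun p => p) n := by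
  unfold Ad
  have h : (Matrix.of fun p q : Fin n => M (rsel σ (p : ℕ)) (q : ℕ))
      = (Matrix.of fun p q : Fin n => M ((p : Fin n) : ℕ) (q : ℕ)).submatrix σ id := by
    ext p q
    simp only [Matrix.of_apply, Matrix.submatrix_apply, id]
    unfold rsel
    rw [dif_pos p.isLt]
  rw [h, Matrix.det_permute]

lemma Bd_one (M : ℕ → ℕ → ℝ) (r : ℕ → ℕ) : Bd M r 1 = 1 := by
  unfold Bd
  rw [Matrix.det_fin_one]
  simp

lemma prod_Icc_one (n : ℕ) (f : ℕ → ℝ) :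
    ∏ j ∈ Finset.Icc 1 n, f j = ∏ i ∈ Finset.range n, f (i + 1) := by
  induction n with
  | zero => simp
  | succ n ih => rw [Finset.prod_Icc_succ_top (by omega), ih, Finset.prod_range_succ]

end ZZ

open ZZ in
/-- The hatted difference matrix as a `ℕ`-indexed function. -/
noncomputable def Mn (d : ℕ) (v : Fin (d + 1) → Fin d → ℝ) : ℕ → ℕ → ℝ :=
  fun i j =>
    if h : i < d ∧ j < d then
      v (Fin.castSucc ⟨i, h.1⟩) ⟨j, h.2⟩ - v (Fin.last d) ⟨j, h.2⟩
    else 0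

lemma XhatM_eq (d : ℕ) (v : Fin (d + 1) → Fin d → ℝ) (σ : Equiv.Perm (Fin d)) {k : ℕ}
    (hk : k ≤ d) :
    XhatM d v σ k = Matrix.of fun p q : Fin k => Mn d v (ZZ.rsel σ (p : ℕ)) (q : ℕ) := by
  ext p q
  have hp : (p : ℕ) < d := lt_of_lt_of_le p.isLt hk
  have hq : (q : ℕ) < d := lt_of_lt_of_le q.isLt hk
  have hσ : (σ ⟨(p : ℕ), hp⟩ : ℕ) < d := (σ ⟨(p : ℕ), hp⟩).isLt
  have hr : ZZ.rsel σ (p : ℕ) = ((σ ⟨(p : ℕ), hp⟩ : Fin d) : ℕ) := by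
    unfold ZZ.rsel
    rw [dif_pos hp]
  simp only [XhatM, Matrix.of_apply, rowVert', coordN, Mn, hr]
  rw [dif_pos hp, dif_pos hq, dif_pos hq, dif_pos ⟨hσ, hq⟩]

lemma YhatM_eq (d : ℕ) (v : Fin (d + 1) → Fin d → ℝ) (σ : Equiv.Perm (Fin d)) {k : ℕ}
    (hk : k ≤ d) :
    YhatM d v σ k = Matrix.of fun p q : Fin k =>
      if (q : ℕ) = 0 then (1 : ℝ) else Mn d v (ZZ.rsel σ (p : ℕ)) ((q : ℕ) - 1) := by
  ext p q
  have hp : (p : ℕ) < d := lt_of_lt_of_le p.isLt hk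
  have hσ : (σ ⟨(p : ℕ), hp⟩ : ℕ) < d := (σ ⟨(p : ℕ), hp⟩).isLt
  rcases Nat.eq_zero_or_pos (q : ℕ) with hq0 | hq0
  · simp only [YhatM, Matrix.of_apply, if_pos hq0]
  · have hq : (q : ℕ) - 1 < d := by omega
    have hr : ZZ.rsel σ (p : ℕ) = ((σ ⟨(p : ℕ), hp⟩ : Fin d) : ℕ) := by
      unfold ZZ.rsel
      rw [dif_pos hp]
    simp only [YhatM, Matrix.of_apply, if_neg (by omega : ¬ (q : ℕ) = 0), rowVert', coordN,
      Mn, hr]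
    rw [dif_pos hp, dif_pos hq, dif_pos hq, dif_pos ⟨hσ, hq⟩]

lemma zhat_eq (d : ℕ) (v : Fin (d + 1) → Fin d → ℝ) (σ : Equiv.Perm (Fin d)) {k : ℕ}
    (hk : k ≤ d) :
    zhat d v σ k = ZZ.Ad (Mn d v) (ZZ.rsel σ) k / ZZ.Bd (Mn d v) (ZZ.rsel σ) k := by
  unfold zhat ZZ.Ad ZZ.Bd
  rw [XhatM_eq d v σ hk, YhatM_eq d v σ hk]

lemma hB_of_GP (d : ℕ) (v : Fin (d + 1) → Fin d → ℝ) (hGP : SimplexGenPos d v) :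
    ∀ k, k ≤ d → ∀ r : ℕ → ℕ, (∀ p, p < k → r p < d) →
      (∀ p p', p < k → p' < k → r p = r p' → p = p') → ZZ.Bd (Mn d v) r k ≠ 0 := by
  intro k hk r hlt hinj
  rcases k with _ | c
  · unfold ZZ.Bd
    simp [Matrix.det_fin_zero]
  · set w : Fin (c + 1) → Fin (d + 1) :=
      fun p => Fin.castSucc (⟨r (p : ℕ), hlt (p : ℕ) p.isLt⟩ : Fin d) with hw
    set y : Fin (c + 1) → (Fin c → ℝ) := fun p => projTo d c (v (w p)) with hy
    have hwinj : Function.Injective w := by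
      intro p p' h
      apply Fin.ext
      refine hinj (p : ℕ) (p' : ℕ) p.isLt p'.isLt ?_
      have h2 := Fin.castSucc_injective d h
      exact congrArg Fin.val h2
    have hU : (Finset.image w Finset.univ).card = c + 1 := by
      rw [Finset.card_image_of_injective _ hwinj, Finset.card_univ, Fintype.card_fin]
    have hc : c < d := by omega
    have hspan := hGP.2 c hc (Finset.image w Finset.univ) hU
    have hset : (projTo d c '' (v '' ((Finset.image w Finset.univ : Finset (Fin (d + 1))) :
        Set (Fin (d + 1))))) = Set.range y := by
      rw [Finset.coe_image, Finset.coe_univ, Set.image_univ, ← Set.range_comp,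
        ← Set.range_comp]
      rfl
    rw [hset] at hspan
    have hvs : vectorSpan ℝ (Set.range y) = ⊤ := by
      rw [← direction_affineSpan, hspan, AffineSubspace.direction_top]
    have hai : AffineIndependent ℝ y := by
      rw [affineIndependent_iff_finrank_vectorSpan_eq ℝ y
        (by simp : Fintype.card (Fin (c + 1)) = c + 1), hvs]
      simp
    intro hdet0
    obtain ⟨t, htne, htM⟩ := Matrix.exists_vecMul_eq_zero_iff.mpr hdet0
    have h0 : ∑ p : Fin (c + 1), t p = 0 := by
      have h00 := congrFun htM (0 : Fin (c + 1))
      simp only [Matrix.vecMul, dotProduct, Matrix.of_apply, Pi.zero_apply] at h00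
      simpa using h00
    have hcoord : ∀ j : Fin c, ∑ p : Fin (c + 1), t p * Mn d v (r (p : ℕ)) (j : ℕ) = 0 := by
      intro j
      have hj := congrFun htM j.succ
      simp only [Matrix.vecMul, dotProduct, Matrix.of_apply, Pi.zero_apply,
        Fin.val_succ] at hj
      simpa using hj
    have hyMn : ∀ (p : Fin (c + 1)) (j : Fin c),
        Mn d v (r (p : ℕ)) (j : ℕ) = y p j - v (Fin.last d) ⟨(j : ℕ), by omega⟩ := by
      intro p j
      have hjd : (j : ℕ) < d := by omega
      simp only [Mn, hy, projTo]
      rw [dif_pos ⟨hlt (p : ℕ) p.isLt, hjd⟩, dif_pos hjd]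
    have hsum : ∑ p : Fin (c + 1), t p • y p = 0 := by
      funext j
      rw [Finset.sum_apply]
      simp only [Pi.smul_apply, smul_eq_mul, Pi.zero_apply]
      have : ∀ p : Fin (c + 1), t p * y p j
          = t p * Mn d v (r (p : ℕ)) (j : ℕ) + t p * v (Fin.last d) ⟨(j : ℕ), by omega⟩ := by
        intro p
        rw [hyMn p j]
        ring
      rw [Finset.sum_congr rfl fun p _ => this p, Finset.sum_add_distrib, hcoord j,
        ← Finset.sum_mul, h0]
      ring
    have hz := affineIndependent_iff.mp hai Finset.univ t (by simpa using h0) (by simpa using hsum)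
    apply htne
    funext p
    exact hz p (Finset.mem_univ p)

theorem signed_sum_prod_zhat_eq_det
    (d : ℕ) (hd : 1 ≤ d) (v : Fin (d + 1) → Fin d → ℝ) (hGP : SimplexGenPos d v) :
    ∑ σ : Equiv.Perm (Fin d),
        ((Equiv.Perm.sign σ : ℤ) : ℝ) * ∏ j ∈ Finset.Icc 1 d, zhat d v σ j
      = (-1 : ℝ) ^ (d * (d - 1) / 2) * (XhatM d v 1 d).det := by
  classical
  obtain ⟨e, rfl⟩ : ∃ e, d = e + 1 := ⟨d - 1, by omega⟩
  set M : ℕ → ℕ → ℝ := Mn (e + 1) v with hM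
  have hX : (XhatM (e + 1) v 1 (e + 1)).det = ZZ.Ad M (fun p => p) (e + 1) := by
    rw [XhatM_eq (e + 1) v 1 le_rfl]
    unfold ZZ.Ad
    congr 1
    ext p q
    simp only [Matrix.of_apply]
    congr 2
    unfold ZZ.rsel
    rw [dif_pos p.isLt]
    simp
  have hterm : ∀ σ : Equiv.Perm (Fin (e + 1)),
      ((Equiv.Perm.sign σ : ℤ) : ℝ) * ∏ j ∈ Finset.Icc 1 (e + 1), zhat (e + 1) v σ j
      = ZZ.Ad M (fun p => p) (e + 1) *
          ∏ i ∈ Finset.range e, (ZZ.Ad M (ZZ.rsel σ) (i + 1) / ZZ.Bd M (ZZ.rsel σ) (i + 2)) := by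
    intro σ
    have h1 : ∏ j ∈ Finset.Icc 1 (e + 1), zhat (e + 1) v σ j
        = ∏ i ∈ Finset.range (e + 1),
            (ZZ.Ad M (ZZ.rsel σ) (i + 1) / ZZ.Bd M (ZZ.rsel σ) (i + 1)) := by
      rw [ZZ.prod_Icc_one]
      refine Finset.prod_congr rfl fun i hi => ?_
      have hi1 : i + 1 ≤ e + 1 := by
        have := Finset.mem_range.mp hi
        omega
      exact zhat_eq (e + 1) v σ hi1
    have hnum : ∏ i ∈ Finset.range (e + 1), ZZ.Ad M (ZZ.rsel σ) (i + 1)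
        = (∏ i ∈ Finset.range e, ZZ.Ad M (ZZ.rsel σ) (i + 1)) * ZZ.Ad M (ZZ.rsel σ) (e + 1) :=
      Finset.prod_range_succ _ _
    have hden : ∏ i ∈ Finset.range (e + 1), ZZ.Bd M (ZZ.rsel σ) (i + 1)
        = (∏ i ∈ Finset.range e, ZZ.Bd M (ZZ.rsel σ) (i + 2)) * ZZ.Bd M (ZZ.rsel σ) 1 :=
      Finset.prod_range_succ' _ _
    set s : ℝ := ((Equiv.Perm.sign σ : ℤ) : ℝ) with hs
    have hss : s * s = 1 := by
      rcases Int.units_eq_one_or (Equiv.Perm.sign σ) with h | h <;> simp [hs, h]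
    set P : ℝ := ∏ i ∈ Finset.range e, ZZ.Ad M (ZZ.rsel σ) (i + 1) with hP
    set Q : ℝ := ∏ i ∈ Finset.range e, ZZ.Bd M (ZZ.rsel σ) (i + 2) with hQ
    calc s * ∏ j ∈ Finset.Icc 1 (e + 1), zhat (e + 1) v σ j
        = s * ((∏ i ∈ Finset.range (e + 1), ZZ.Ad M (ZZ.rsel σ) (i + 1))
            / (∏ i ∈ Finset.range (e + 1), ZZ.Bd M (ZZ.rsel σ) (i + 1))) := by
          rw [h1, Finset.prod_div_distrib]
      _ = s * ((P * (s * ZZ.Ad M (fun p => p) (e + 1))) / (Q * 1)) := by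
          rw [hnum, hden, ZZ.Ad_perm, ZZ.Bd_one, ← hs]
      _ = ZZ.Ad M (fun p => p) (e + 1) * (P / Q) := by
          rw [mul_one, div_eq_mul_inv, div_eq_mul_inv]
          linear_combination (ZZ.Ad M (fun p => p) (e + 1) * P * Q⁻¹) * hss
      _ = ZZ.Ad M (fun p => p) (e + 1)
            * ∏ i ∈ Finset.range e, (ZZ.Ad M (ZZ.rsel σ) (i + 1) / ZZ.Bd M (ZZ.rsel σ) (i + 2)) := by
          rw [Finset.prod_div_distrib, hP, hQ]
  rw [Finset.sum_congr rfl (fun σ _ => hterm σ), ← Finset.mul_sum]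
  have hcore := ZZ.coreAux (e + 1) M (hB_of_GP (e + 1) v hGP)
  simp only [Nat.add_sub_cancel] at hcore ⊢
  rw [hcore, hX, mul_comm]
end
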